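/- arXiv:1204.5203 — 4 statements merged into one kernel-verified Lean document; each statement's English description precedes it below -/
import Mathlib

section
/- Let n ≥ 2 and let f : 𝔽₂ⁿ → 𝔽₂ be a nested canalizing function written in layered form with layer sizes k₁,…,k_r. Then the average sensitivity of f equals s^f = Σ_{l=1}^{r} k_l · A_l^f = (1/2^{n−1}) · Σ_{l=1}^{r} k_l · Σ_{j=1}^{r−l+1} (−1)^{j−1} · 2^{n − (k₁+⋯+k_{j+l−1})}, where A_l^f is the common activity of the variables in the l-th layer. -/
/-- `f` is nested canalizing in the variable order `σ(0), σ(1), …, σ(n-1)`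
with canalizing input values `a` and canalized output values `b`:
`f x = b k` whenever `x (σ j) = a j + 1` for all `j < k` and `x (σ k) = a k`,
and `f x = b (last) + 1` whenever `x (σ j) = a j + 1` for all `j`. -/
def IsNCF {n : ℕ} (f : (Fin n → ZMod 2) → ZMod 2) (σ : Equiv.Perm (Fin n))
    (a b : Fin n → ZMod 2) : Prop :=
  (∀ (k : Fin n) (x : Fin n → ZMod 2),
      (∀ j : Fin n, j < k → x (σ j) = a j + 1) → x (σ k) = a k → f x = b k) ∧
  (∀ k : Fin n, (∀ j : Fin n, j ≤ k) →
      ∀ x : Fin n → ZMod 2, (∀ j : Fin n, x (σ j) = a j + 1) → f x = b k + 1)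

/-- The nested expression `M i * (M (i+1) * ( … * (M (i+t-1) + 1) … ) + 1)`
with `t` factors, i.e. `nestVal M t i = Mᵢ(M_{i+1}(⋯(M_{i+t-1} ⊕ 1)⋯) ⊕ 1)`. -/
def nestVal (M : ℕ → ZMod 2) : ℕ → ℕ → ZMod 2
  | 0, _ => 0
  | 1, i => M i
  | (t + 2), i => M i * (nestVal M (t + 1) (i + 1) + 1)

/-- The extended monomial of the `i`-th layer, given the layer assignment `L`
and the complemented inputs `a`:  `Mᵢ(x) = ∏_{L j = i} (x j ⊕ a j)`. -/
def layerMon {n r : ℕ} (L : Fin n → Fin r) (a : Fin n → ZMod 2) (i : ℕ)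
    (x : Fin n → ZMod 2) : ZMod 2 :=
  ∏ j ∈ Finset.univ.filter (fun j : Fin n => (L j : ℕ) = i), (x j + a j)

/-- `kᵢ`, the number of variables in the `i`-th layer. -/
def layerSize {n r : ℕ} (L : Fin n → Fin r) (i : ℕ) : ℕ :=
  (Finset.univ.filter (fun j : Fin n => (L j : ℕ) = i)).card

/-- `K_l = k₀ + k₁ + ⋯ + k_{l-1}`, the number of variables in the first `l` layers. -/
def layerSum {n r : ℕ} (L : Fin n → Fin r) (l : ℕ) : ℕ :=
  ∑ i ∈ Finset.range l, layerSize L i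

/-- `f` is given in the layered form
`f = M₁(M₂(⋯(M_{r−1}(M_r ⊕ 1) ⊕ 1)⋯) ⊕ 1) ⊕ b`, where the `Mᵢ` are extended
monomials in pairwise disjoint sets of variables comprising all `n` variables
(the variable set of `Mᵢ` being the `i`-th layer `{j | L j = i}`), every layer
is nonempty, and the last layer has at least two variables. -/
def IsLayeredForm {n r : ℕ} (f : (Fin n → ZMod 2) → ZMod 2)
    (L : Fin n → Fin r) (a : Fin n → ZMod 2) (b : ZMod 2) : Prop :=
  1 ≤ r ∧
  (∀ i : Fin r, 1 ≤ layerSize L (i : ℕ)) ∧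
  2 ≤ layerSize L (r - 1) ∧
  ∀ x : Fin n → ZMod 2, f x = nestVal (fun i => layerMon L a i x) r 0 + b

/-- The activity `λᵢᶠ = 2⁻ⁿ ∑_x (f(x with xᵢ flipped) ⊕ f(x))`, the Boolean
difference being regarded as the integer 0 or 1. -/
def activity {n : ℕ} (f : (Fin n → ZMod 2) → ZMod 2) (i : Fin n) : ℚ :=
  (1 / 2 ^ n) * ∑ x : Fin n → ZMod 2,
    ((f (Function.update x i (x i + 1)) + f x).val : ℚ)

/-- The average sensitivity `sᶠ = ∑ᵢ λᵢᶠ`. -/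
def avgSens {n : ℕ} (f : (Fin n → ZMod 2) → ZMod 2) : ℚ :=
  ∑ i : Fin n, activity f i


section Aux

/-! ### Small `ZMod 2` facts -/

lemma val_mul_nat (u v : ZMod 2) : (u*v).val = u.val * v.val := by revert u v; decide

lemma val_mul_q (u v : ZMod 2) : (((u*v).val : ℕ) : ℚ) = (u.val : ℚ) * (v.val : ℚ) := by
  rw [val_mul_nat]; push_cast; ring

lemma val_add_one_nat (v : ZMod 2) : (v + 1).val + v.val = 1 := by revert v; decide

lemma val_add_one (v : ZMod 2) : ((v + 1).val : ℚ) = 1 - (v.val : ℚ) := by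
  have h : ((v+1).val : ℚ) + (v.val : ℚ) = 1 :=
    mod_cast congrArg (Nat.cast : ℕ → ℚ) (val_add_one_nat v)
  linarith

lemma val_flip_add_nat (v c : ZMod 2) : (v + 1 + c).val + (v + c).val = 1 := by
  revert v c; decide

lemma flip_factor (v c : ZMod 2) : (v + 1 + c) + (v + c) = 1 := by revert v c; decide

lemma mul_add_one_add (m p q : ZMod 2) : m*(p+1)+m*(q+1) = m*(p+q) := by
  revert m p q; decide

lemma add_b_cancel (A B c : ZMod 2) : (A+c)+(B+c) = A+B := by revert A B c; decide

/-! ### Summation over the hypercube -/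

lemma flip_flip_update {n : ℕ} (x : Fin n → ZMod 2) (j : Fin n) :
    Function.update (Function.update x j (x j + 1)) j
      ((Function.update x j (x j + 1)) j + 1) = x := by
  have h2 : (1 : ZMod 2) + 1 = 0 := rfl
  rw [Function.update_self, Function.update_idem, add_assoc, h2, add_zero,
    Function.update_eq_self]

lemma sum_flip {n : ℕ} (g : (Fin n → ZMod 2) → ℚ) (j : Fin n) :
    ∑ x : Fin n → ZMod 2, g (Function.update x j (x j + 1)) = ∑ x : Fin n → ZMod 2, g x :=
  Fintype.sum_bijective _
    (Function.Involutive.bijective (fun x => flip_flip_update x j)) _ _ (fun _ => rfl)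

lemma sum_indicator_one {n : ℕ} (g : (Fin n → ZMod 2) → ℚ) (j : Fin n) (c : ZMod 2)
    (hg : ∀ x v, g (Function.update x j v) = g x) :
    ∑ x : Fin n → ZMod 2, ((x j + c).val : ℚ) * g x
      = (1/2) * ∑ x : Fin n → ZMod 2, g x := by
  have hflip := sum_flip (fun x => ((x j + c).val : ℚ) * g x) j
  simp only [Function.update_self, hg] at hflip
  have key : (2:ℚ) * ∑ x : Fin n → ZMod 2, ((x j + c).val : ℚ) * g x
      = ∑ x : Fin n → ZMod 2, g x := by
    rw [two_mul]
    nth_rewrite 1 [← hflip]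
    rw [← Finset.sum_add_distrib]
    apply Finset.sum_congr rfl
    intro x _
    rw [← add_mul]
    have h1 : ((x j + 1 + c).val : ℚ) + ((x j + c).val : ℚ) = 1 :=
      mod_cast congrArg (Nat.cast : ℕ → ℚ) (val_flip_add_nat (x j) c)
    rw [h1, one_mul]
  linarith

lemma sum_indicator {n : ℕ} (a : Fin n → ZMod 2) (S : Finset (Fin n))
    (g : (Fin n → ZMod 2) → ℚ)
    (hg : ∀ j ∈ S, ∀ x v, g (Function.update x j v) = g x) :
    ∑ x : Fin n → ZMod 2, (∏ i ∈ S, ((x i + a i).val : ℚ)) * g x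
      = (1/2) ^ S.card * ∑ x : Fin n → ZMod 2, g x := by
  classical
  induction S using Finset.induction_on with
  | empty => simp
  | @insert j S hj ih =>
    have hgS : ∀ i ∈ S, ∀ x v, g (Function.update x i v) = g x :=
      fun i hi => hg i (Finset.mem_insert_of_mem hi)
    have hgj : ∀ x v, g (Function.update x j v) = g x :=
      hg j (Finset.mem_insert_self j S)
    have step : ∑ x : Fin n → ZMod 2, (∏ i ∈ insert j S, ((x i + a i).val : ℚ)) * g x
        = ∑ x : Fin n → ZMod 2, ((x j + a j).val : ℚ)
            * ((∏ i ∈ S, ((x i + a i).val : ℚ)) * g x) := by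
      apply Finset.sum_congr rfl; intro x _
      rw [Finset.prod_insert hj, mul_assoc]
    rw [step, sum_indicator_one _ j (a j) ?_, ih hgS, Finset.card_insert_of_notMem hj,
      pow_succ]
    · ring
    · intro x v
      rw [hgj]
      congr 1
      apply Finset.prod_congr rfl
      intro i hi
      rw [Function.update_of_ne (fun h : i = j => hj (h ▸ hi))]

lemma sum_val_add_one {n : ℕ} (F : (Fin n → ZMod 2) → ZMod 2) :
    ∑ x : Fin n → ZMod 2, ((F x + 1).val : ℚ)
      = 2^n - ∑ x : Fin n → ZMod 2, ((F x).val : ℚ) := by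
  have h : ∀ x, ((F x + 1).val : ℚ) = 1 - ((F x).val : ℚ) := fun x => val_add_one (F x)
  simp_rw [h]
  rw [Finset.sum_sub_distrib, Finset.sum_const, Finset.card_univ]
  congr 1
  simp [Fintype.card_fun]

/-! ### Structure of the layered form -/

lemma nestVal_succ (M : ℕ → ZMod 2) (t i : ℕ) :
    nestVal M (t+1) i = M i * (nestVal M t (i+1) + 1) := by
  cases t with
  | zero => simp [nestVal]
  | succ t => rfl

lemma layerMon_update {n r : ℕ} (L : Fin n → Fin r) (a : Fin n → ZMod 2) (i : ℕ)
    (x : Fin n → ZMod 2) (j : Fin n) (v : ZMod 2) (hij : (L j : ℕ) ≠ i) :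
    layerMon L a i (Function.update x j v) = layerMon L a i x := by
  unfold layerMon
  apply Finset.prod_congr rfl
  intro t ht
  rw [Finset.mem_filter] at ht
  rw [Function.update_of_ne (fun h : t = j => hij (h ▸ ht.2))]

lemma nestVal_update {n r : ℕ} (L : Fin n → Fin r) (a : Fin n → ZMod 2)
    (x : Fin n → ZMod 2) (j : Fin n) (v : ZMod 2) :
    ∀ t s, (L j : ℕ) < s →
    nestVal (fun i => layerMon L a i (Function.update x j v)) t s
      = nestVal (fun i => layerMon L a i x) t s := by
  intro t
  induction t with
  | zero => intro s _; rfl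
  | succ t ih =>
    intro s hs
    rw [nestVal_succ, nestVal_succ, layerMon_update L a s x j v (Nat.ne_of_lt hs),
      ih (s+1) (by omega)]

lemma layerMon_split {n r : ℕ} (L : Fin n → Fin r) (a : Fin n → ZMod 2) (j : Fin n)
    (y : Fin n → ZMod 2) :
    layerMon L a (L j : ℕ) y
      = (y j + a j) * ∏ t ∈ (Finset.univ.filter
          fun t : Fin n => (L t : ℕ) = (L j : ℕ)).erase j, (y t + a t) := by
  unfold layerMon
  exact (Finset.mul_prod_erase _ _ (by simp)).symm

lemma nest_diff {n r : ℕ} (L : Fin n → Fin r) (a : Fin n → ZMod 2) (j : Fin n)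
    (x : Fin n → ZMod 2) :
    ∀ d s, s + d = (L j : ℕ) →
    nestVal (fun i => layerMon L a i (Function.update x j (x j + 1))) (r - s) s
      + nestVal (fun i => layerMon L a i x) (r - s) s
    = (∏ i ∈ Finset.Ico s (L j : ℕ), layerMon L a i x)
      * ((∏ t ∈ (Finset.univ.filter
            fun t : Fin n => (L t : ℕ) = (L j : ℕ)).erase j, (x t + a t))
        * (nestVal (fun i => layerMon L a i x) (r - ((L j : ℕ) + 1)) ((L j : ℕ) + 1) + 1)) := by
  intro d
  induction d with
  | zero =>
    intro s hs
    rw [Nat.add_zero] at hs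
    subst hs
    have hlr : (L j : ℕ) < r := (L j).isLt
    have h1 : r - (L j : ℕ) = (r - ((L j : ℕ) + 1)) + 1 := by omega
    rw [h1, nestVal_succ, nestVal_succ,
      nestVal_update L a x j (x j + 1) _ _ (by omega),
      layerMon_split L a j, layerMon_split L a j x, Finset.Ico_self,
      Finset.prod_empty, one_mul]
    have hupd : Function.update x j (x j + 1) j + a j = x j + 1 + a j := by
      rw [Function.update_self]
    rw [hupd]
    have hP : ∏ t ∈ (Finset.univ.filter
          fun t : Fin n => (L t : ℕ) = (L j : ℕ)).erase j,
        (Function.update x j (x j + 1) t + a t)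
        = ∏ t ∈ (Finset.univ.filter
          fun t : Fin n => (L t : ℕ) = (L j : ℕ)).erase j, (x t + a t) := by
      apply Finset.prod_congr rfl
      intro t ht
      rw [Function.update_of_ne (Finset.ne_of_mem_erase ht)]
    rw [hP]
    have huw := flip_factor (x j) (a j)
    linear_combination ((∏ t ∈ (Finset.univ.filter
          fun t : Fin n => (L t : ℕ) = (L j : ℕ)).erase j, (x t + a t))
      * (nestVal (fun i => layerMon L a i x) (r - ((L j : ℕ) + 1)) ((L j : ℕ) + 1) + 1)) * huw
  | succ d ih =>
    intro s hs
    have hsl : s < (L j : ℕ) := by omega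
    have hsr : s < r := lt_of_lt_of_le hsl (Nat.le_of_lt (L j).isLt)
    have h1 : r - s = (r - (s + 1)) + 1 := by omega
    rw [h1, nestVal_succ, nestVal_succ,
      layerMon_update L a s x j (x j + 1) (by omega),
      mul_add_one_add, ih (s+1) (by omega),
      Finset.prod_eq_prod_Ico_succ_bot hsl]
    ring

/-! ### Counting -/

lemma card_filter_lt {n r : ℕ} (L : Fin n → Fin r) (m : ℕ) :
    (Finset.univ.filter fun t : Fin n => (L t : ℕ) < m).card = layerSum L m := by
  classical
  rw [Finset.card_eq_sum_card_fiberwise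
    (f := fun t : Fin n => (L t : ℕ)) (t := Finset.range m)
    (fun t ht => by simpa using (Finset.mem_filter.mp ht).2)]
  unfold layerSum layerSize
  apply Finset.sum_congr rfl
  intro i hi
  rw [Finset.mem_range] at hi
  congr 1
  rw [Finset.filter_filter]
  apply Finset.filter_congr
  intro t _
  constructor
  · exact fun h => h.2
  · exact fun h => ⟨by omega, h⟩

lemma layerSum_top {n r : ℕ} (L : Fin n → Fin r) : layerSum L r = n := by
  rw [← card_filter_lt]
  have h : (Finset.univ.filter fun t : Fin n => (L t : ℕ) < r) = Finset.univ := by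
    apply Finset.filter_true_of_mem
    intro t _
    exact (L t).isLt
  rw [h, Finset.card_univ, Fintype.card_fin]

lemma layerSum_mono {n r : ℕ} (L : Fin n → Fin r) {m m' : ℕ} (h : m ≤ m') :
    layerSum L m ≤ layerSum L m' :=
  Finset.sum_le_sum_of_subset (Finset.range_subset_range.mpr h)

lemma layerSum_le_n {n r : ℕ} (L : Fin n → Fin r) {m : ℕ} (h : m ≤ r) :
    layerSum L m ≤ n :=
  (layerSum_mono L h).trans (le_of_eq (layerSum_top L))

lemma layerSum_succ' {n r : ℕ} (L : Fin n → Fin r) (m : ℕ) :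
    layerSum L (m+1) = layerSum L m + layerSize L m :=
  Finset.sum_range_succ _ m

lemma val_prod {n : ℕ} (s : Finset (Fin n)) (g : Fin n → ZMod 2) :
    (((∏ i ∈ s, g i).val : ℕ) : ℚ) = ∏ i ∈ s, ((g i).val : ℚ) := by
  classical
  induction s using Finset.cons_induction with
  | empty => rw [Finset.prod_empty, Finset.prod_empty, ZMod.val_one]; norm_num
  | cons j s hj ih =>
    rw [Finset.prod_cons, Finset.prod_cons, val_mul_nat, ← ih]
    push_cast
    ring

/-! ### The key quantity `T` -/

/-- `T_l = ∑_x N_l(x)` where `N_l = M_l(M_{l+1}(⋯) ⊕ 1)` is the tail of the nest. -/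
def Tval {n r : ℕ} (L : Fin n → Fin r) (a : Fin n → ZMod 2) (l : ℕ) : ℚ :=
  ∑ x : Fin n → ZMod 2, ((nestVal (fun i => layerMon L a i x) (r - l) l).val : ℚ)

lemma Tval_top {n r : ℕ} (L : Fin n → Fin r) (a : Fin n → ZMod 2) :
    Tval L a r = 0 := by
  unfold Tval
  rw [Nat.sub_self]
  simp [nestVal]

lemma Tval_rec {n r : ℕ} (L : Fin n → Fin r) (a : Fin n → ZMod 2) {l : ℕ} (hl : l < r) :
    Tval L a l = (1/2) ^ (layerSize L l) * ((2:ℚ)^n - Tval L a (l+1)) := by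
  classical
  have h1 : r - l = (r - (l+1)) + 1 := by omega
  unfold Tval
  rw [h1]
  have step : ∀ x : Fin n → ZMod 2,
      ((nestVal (fun i => layerMon L a i x) ((r - (l+1)) + 1) l).val : ℚ)
      = (∏ i ∈ Finset.univ.filter (fun t : Fin n => (L t : ℕ) = l),
            ((x i + a i).val : ℚ))
        * ((nestVal (fun i => layerMon L a i x) (r - (l+1)) (l+1) + 1).val : ℚ) := by
    intro x
    rw [nestVal_succ, val_mul_q, ← val_prod]
    rfl
  simp_rw [step]
  rw [sum_indicator a _ _ ?inv]
  · rw [sum_val_add_one]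
    rfl
  case inv =>
    intro t ht x v
    have hts : (L t : ℕ) = l := (Finset.mem_filter.mp ht).2
    congr 1
    rw [nestVal_update L a x t v _ _ (by omega)]

lemma T_closed {n r : ℕ} (L : Fin n → Fin r) (a : Fin n → ZMod 2) :
    ∀ d m, m + d = r →
    (2:ℚ)^n - Tval L a m
      = 2 ^ (layerSum L m) * ∑ j ∈ Finset.range (r - m + 1),
          (-1:ℚ)^j * 2 ^ (n - layerSum L (j + m)) := by
  intro d
  induction d with
  | zero =>
    intro m hm
    rw [Nat.add_zero] at hm
    subst hm
    rw [Tval_top, Nat.sub_self, Finset.sum_range_one]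
    simp [layerSum_top]
  | succ d ih =>
    intro m hm
    have hmr : m < r := by omega
    rw [Tval_rec L a hmr, ih (m+1) (by omega)]
    have h2 : r - (m+1) + 1 = r - m := by omega
    rw [h2]
    set S := ∑ j ∈ Finset.range (r - m), (-1:ℚ)^j * 2 ^ (n - layerSum L (j + (m+1))) with hS
    have hsplit : ∑ j ∈ Finset.range (r - m + 1), (-1:ℚ)^j * 2 ^ (n - layerSum L (j + m))
        = -S + 2 ^ (n - layerSum L m) := by
      rw [Finset.sum_range_succ' (fun j => (-1:ℚ)^j * 2 ^ (n - layerSum L (j + m))) (r - m)]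
      rw [hS]
      rw [← Finset.sum_neg_distrib]
      congr 1
      · apply Finset.sum_congr rfl
        intro i _
        have : i + 1 + m = i + (m + 1) := by omega
        rw [this, pow_succ]
        ring
      · norm_num
    rw [hsplit]
    have hKle : layerSum L m ≤ n := layerSum_le_n L (by omega)
    have e1 : (2:ℚ)^(layerSum L m) * 2^(n - layerSum L m) = 2^n := by
      rw [← pow_add]
      congr 1
      omega
    have e2 : ((1:ℚ)/2)^(layerSize L m) * 2^(layerSum L (m+1)) = 2^(layerSum L m) := by
      rw [layerSum_succ', pow_add, one_div, inv_pow]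
      have h2k : (2:ℚ)^(layerSize L m) ≠ 0 := by positivity
      field_simp
    linear_combination (-S) * e2 - e1

end Aux


lemma activity_formula {n r : ℕ} (hn : 1 ≤ n) (f : (Fin n → ZMod 2) → ZMod 2)
    (L : Fin n → Fin r) (a : Fin n → ZMod 2) (b : ZMod 2)
    (h : IsLayeredForm f L a b) (j : Fin n) :
    activity f j = (1 / 2 ^ (n - 1)) *
      ∑ i ∈ Finset.range (r - (L j : ℕ)),
        (-1 : ℚ) ^ i * 2 ^ (n - layerSum L (i + (L j : ℕ) + 1)) := by
  classical
  obtain ⟨hr, hsize, -, hf⟩ := h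
  have hlr : (L j : ℕ) < r := (L j).isLt
  have hk1 : 1 ≤ layerSize L (L j : ℕ) := hsize (L j)
  have hK1 : 1 ≤ layerSum L ((L j : ℕ) + 1) := by
    rw [layerSum_succ']; omega
  set Sl : Finset (Fin n) :=
    (Finset.univ.filter fun t : Fin n => (L t : ℕ) < (L j : ℕ))
      ∪ ((Finset.univ.filter fun t : Fin n => (L t : ℕ) = (L j : ℕ)).erase j) with hSl
  have hdisj : Disjoint (Finset.univ.filter fun t : Fin n => (L t : ℕ) < (L j : ℕ))
      ((Finset.univ.filter fun t : Fin n => (L t : ℕ) = (L j : ℕ)).erase j) := by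
    rw [Finset.disjoint_left]
    intro t ht ht'
    rw [Finset.mem_filter] at ht
    have := (Finset.mem_filter.mp (Finset.mem_of_mem_erase ht')).2
    omega
  have hcard : Sl.card = layerSum L ((L j : ℕ) + 1) - 1 := by
    rw [hSl, Finset.card_union_of_disjoint hdisj, card_filter_lt,
      Finset.card_erase_of_mem (by simp)]
    have h5 : (Finset.univ.filter fun t : Fin n => (L t : ℕ) = (L j : ℕ)).card
        = layerSize L (L j : ℕ) := rfl
    rw [h5, layerSum_succ']
    omega
  have hmem : ∀ t ∈ Sl, (L t : ℕ) < (L j : ℕ) + 1 := by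
    intro t ht
    rw [hSl, Finset.mem_union] at ht
    rcases ht with ht | ht
    · have := (Finset.mem_filter.mp ht).2; omega
    · have := (Finset.mem_filter.mp (Finset.mem_of_mem_erase ht)).2; omega
  have hD : ∀ x : Fin n → ZMod 2,
      f (Function.update x j (x j + 1)) + f x
      = (∏ t ∈ Sl, (x t + a t))
        * (nestVal (fun i => layerMon L a i x) (r - ((L j : ℕ) + 1)) ((L j : ℕ) + 1) + 1) := by
    intro x
    rw [hf, hf, add_b_cancel]
    have h0 := nest_diff L a j x (L j : ℕ) 0 (by omega)
    rw [Nat.sub_zero] at h0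
    rw [h0]
    have hIco : (∏ i ∈ Finset.Ico 0 (L j : ℕ), layerMon L a i x)
        = ∏ t ∈ Finset.univ.filter (fun t : Fin n => (L t : ℕ) < (L j : ℕ)),
            (x t + a t) := by
      rw [← Finset.range_eq_Ico]
      rw [← Finset.prod_fiberwise_of_maps_to
        (s := Finset.univ.filter fun t : Fin n => (L t : ℕ) < (L j : ℕ))
        (t := Finset.range (L j : ℕ)) (g := fun t : Fin n => (L t : ℕ))
        (fun t ht => by simpa using (Finset.mem_filter.mp ht).2)
        (fun t => x t + a t)]
      apply Finset.prod_congr rfl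
      intro i hi
      rw [Finset.mem_range] at hi
      unfold layerMon
      apply Finset.prod_congr ?_ (fun _ _ => rfl)
      rw [Finset.filter_filter]
      ext t
      simp only [Finset.mem_filter, Finset.mem_univ, true_and]
      omega
    rw [hIco, hSl, Finset.prod_union hdisj]
    ring
  unfold activity
  have hsum : ∑ x : Fin n → ZMod 2, ((f (Function.update x j (x j + 1)) + f x).val : ℚ)
      = (1/2) ^ Sl.card * ((2:ℚ)^n - Tval L a ((L j : ℕ) + 1)) := by
    have step : ∀ x : Fin n → ZMod 2,
        ((f (Function.update x j (x j + 1)) + f x).val : ℚ)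
        = (∏ t ∈ Sl, ((x t + a t).val : ℚ))
          * ((nestVal (fun i => layerMon L a i x) (r - ((L j : ℕ)+1)) ((L j : ℕ)+1)
              + 1).val : ℚ) := by
      intro x
      rw [hD x, val_mul_q, ← val_prod]
    simp_rw [step]
    rw [sum_indicator a Sl _ ?_]
    · rw [sum_val_add_one]
      rfl
    · intro t ht x v
      congr 1
      rw [nestVal_update L a x t v _ _ (hmem t ht)]
  rw [hsum, hcard]
  have hclosed := T_closed L a (r - ((L j : ℕ)+1)) ((L j : ℕ)+1) (by omega)
  rw [hclosed]
  have h2 : r - ((L j : ℕ)+1) + 1 = r - (L j : ℕ) := by omega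
  rw [h2]
  have hidx : ∀ i : ℕ, i + ((L j : ℕ)+1) = i + (L j : ℕ) + 1 := fun i => by omega
  simp_rw [hidx]
  set S := ∑ i ∈ Finset.range (r - (L j : ℕ)),
      (-1:ℚ)^i * 2 ^ (n - layerSum L (i + (L j : ℕ) + 1)) with hS2
  have e4 : (2:ℚ)^n = 2 * 2^(n-1) := by
    rw [← pow_succ']
    congr 1
    omega
  have e5 : (2:ℚ)^(layerSum L ((L j : ℕ)+1))
      = 2 * 2^(layerSum L ((L j : ℕ)+1) - 1) := by
    rw [← pow_succ']
    congr 1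
    omega
  rw [e4, e5]
  have h2a : (2:ℚ)^(n-1) ≠ 0 := by positivity
  have h2b : (2:ℚ)^(layerSum L ((L j : ℕ)+1) - 1) ≠ 0 := by positivity
  rw [one_div, one_div, one_div, inv_pow]
  field_simp

/-- The average sensitivity of a nested canalizing function in layered form
with layer sizes `k₁,…,k_r` is
`sᶠ = Σ_{l=1}^{r} k_l·A_l = 2^{-(n−1)} Σ_{l=1}^{r} k_l Σ_{j=1}^{r−l+1}
(−1)^{j−1} 2^{n−(k₁+⋯+k_{j+l−1})}` (layers indexed from 0 here). -/
theorem statement14 {n r : ℕ} (hn : 2 ≤ n) (f : (Fin n → ZMod 2) → ZMod 2)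
    (L : Fin n → Fin r) (a : Fin n → ZMod 2) (b : ZMod 2)
    (h : IsLayeredForm f L a b) :
    avgSens f = (1 / 2 ^ (n - 1)) *
      ∑ l ∈ Finset.range r, (layerSize L l : ℚ) *
        ∑ j ∈ Finset.range (r - l),
          (-1 : ℚ) ^ j * 2 ^ (n - layerSum L (j + l + 1)) := by
  classical
  unfold avgSens
  have hact : ∀ j : Fin n, activity f j = (1 / 2 ^ (n - 1)) *
      ∑ i ∈ Finset.range (r - (L j : ℕ)),
        (-1 : ℚ) ^ i * 2 ^ (n - layerSum L (i + (L j : ℕ) + 1)) :=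
    fun j => activity_formula (by omega) f L a b h j
  simp_rw [hact]
  rw [← Finset.mul_sum]
  congr 1
  rw [← Finset.sum_fiberwise_of_maps_to (t := Finset.range r)
    (g := fun t : Fin n => (L t : ℕ))
    (fun t _ => Finset.mem_range.mpr (L t).isLt)
    (fun j : Fin n => ∑ i ∈ Finset.range (r - (L j : ℕ)),
      (-1:ℚ)^i * 2^(n - layerSum L (i + (L j : ℕ) + 1)))]
  apply Finset.sum_congr rfl
  intro l hl
  have hinner : ∀ j ∈ Finset.univ.filter (fun t : Fin n => (L t : ℕ) = l),
      (∑ i ∈ Finset.range (r - (L j : ℕ)),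
        (-1:ℚ)^i * 2^(n - layerSum L (i + (L j : ℕ) + 1)))
      = ∑ i ∈ Finset.range (r - l), (-1:ℚ)^i * 2^(n - layerSum L (i + l + 1)) := by
    intro t ht
    rw [(Finset.mem_filter.mp ht).2]
  rw [Finset.sum_congr rfl hinner, Finset.sum_const, nsmul_eq_mul]
  rfl
end

section
/- Let n ≥ 3 and let f : 𝔽₂ⁿ → 𝔽₂ be a nested canalizing function written in layered form with layer sizes k₁,…,k_r, and let A_l^f be the common activity of the variables in the l-th layer. Then the layer activities are strictly decreasing: A_1^f > A_2^f > ⋯ > A_r^f. -/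
namespace St15


/-- tail-vanishing probability recursion -/
def Q (k : ℕ → ℕ) (r t : ℕ) : ℚ :=
  if h : r ≤ t then 1 else 1 - (1/2 : ℚ) ^ (k t) * Q k r (t + 1)
termination_by r - t
decreasing_by omega

lemma Q_of_ge (k r t) (h : r ≤ t) : Q k r t = 1 := by rw [Q]; simp [h]

lemma Q_of_lt (k r t) (h : t < r) : Q k r t = 1 - (1/2 : ℚ) ^ (k t) * Q k r (t+1) := by
  rw [Q]; simp [Nat.not_le.mpr h]

lemma Q_nonneg_le_one (k r t) : 0 ≤ Q k r t ∧ Q k r t ≤ 1 := by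
  rcases le_or_gt r t with h | h
  · rw [Q_of_ge _ _ _ h]; norm_num
  · rw [Q_of_lt _ _ _ h]
    obtain ⟨h0, h1⟩ := Q_nonneg_le_one k r (t+1)
    have hp : (0:ℚ) < (1/2 : ℚ) ^ (k t) := by positivity
    have hp1 : (1/2 : ℚ) ^ (k t) ≤ 1 := pow_le_one₀ (by norm_num) (by norm_num)
    constructor
    · nlinarith
    · nlinarith
termination_by r - t
decreasing_by omega

lemma Q_pos (k r t) (hk : ∀ s, s < r → 1 ≤ k s) : 0 < Q k r t := by
  rcases le_or_gt r t with h | h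
  · rw [Q_of_ge _ _ _ h]; norm_num
  · rw [Q_of_lt _ _ _ h]
    obtain ⟨h0, h1⟩ := Q_nonneg_le_one k r (t+1)
    have : (1/2 : ℚ) ^ (k t) ≤ 1/2 := by
      calc (1/2 : ℚ) ^ (k t) ≤ (1/2:ℚ)^1 := by
            apply pow_le_pow_of_le_one (by norm_num) (by norm_num) (hk t h)
        _ = 1/2 := by norm_num
    have hp : (0:ℚ) < (1/2 : ℚ) ^ (k t) := by positivity
    nlinarith

lemma Q_lt_one (k r t) (ht : t < r) (hk : ∀ s, s < r → 1 ≤ k s) : Q k r t < 1 := by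
  rw [Q_of_lt _ _ _ ht]
  have h0 := Q_pos k r (t+1) hk
  have hp : (0:ℚ) < (1/2 : ℚ) ^ (k t) := by positivity
  nlinarith

/- nestVal lemmas -/
lemma nestVal_eq_mul (M : ℕ → ZMod 2) (u i : ℕ) (hu : 1 ≤ u) :
    nestVal M u i = M i * (nestVal M (u - 1) (i + 1) + 1) := by
  match u with
  | 1 => show M i = M i * (0 + 1); rw [zero_add, mul_one]
  | (t+2) => rfl

theorem nestVal_congr (M M' : ℕ → ZMod 2) (t i : ℕ)
    (h : ∀ s, i ≤ s → s < i + t → M s = M' s) : nestVal M t i = nestVal M' t i := by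
  match t with
  | 0 => rfl
  | 1 => exact h i le_rfl (by omega)
  | (t+2) =>
    show M i * _ = M' i * _
    rw [h i le_rfl (by omega),
      nestVal_congr M M' (t+1) (i+1) (fun s h1 h2 => h s (by omega) (by omega))]
termination_by t

theorem nest_diff (M M' : ℕ → ZMod 2) (l r i : ℕ) (hr : l < r)
    (hM : ∀ t, t ≠ i + l → M' t = M t) :
    nestVal M' r i + nestVal M r i =
      (∏ t ∈ Finset.range l, M (i+t)) * (M' (i+l) + M (i+l)) *
        (nestVal M (r - l - 1) (i+l+1) + 1) := by
  match l with
  | 0 =>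
    rw [nestVal_eq_mul M r i (by omega), nestVal_eq_mul M' r i (by omega),
      nestVal_congr M' M (r-1) (i+1) (fun s h1 h2 => hM s (by omega))]
    simp only [Finset.range_zero, Finset.prod_empty, Nat.add_zero, Nat.sub_zero]
    ring
  | (l+1) =>
    rw [nestVal_eq_mul M r i (by omega), nestVal_eq_mul M' r i (by omega),
      hM i (by omega)]
    have h2 : ∀ u v w : ZMod 2, u*(v+1) + u*(w+1) = u*(v+w) := by decide
    rw [h2]
    rw [nest_diff M M' l (r-1) (i+1) (by omega) (fun t ht => hM t (by omega))]
    rw [Finset.prod_range_succ']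
    have e1 : ∀ t : ℕ, i + 1 + t = i + (t + 1) := fun t => by omega
    have e2 : r - 1 - l - 1 = r - (l+1) - 1 := by omega
    have e3 : i + 1 + l + 1 = i + (l+1) + 1 := by omega
    have e4 : i + 1 + l = i + (l+1) := by omega
    rw [e2, e3, e4]
    rw [show (∏ t ∈ Finset.range l, M (i + 1 + t)) = ∏ t ∈ Finset.range l, M (i + (t+1))
      from Finset.prod_congr rfl (fun t _ => by rw [e1])]
    generalize (∏ t ∈ Finset.range l, M (i + (t+1))) = A
    generalize (M' (i + (l+1)) + M (i + (l+1))) = B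
    generalize (nestVal M (r - (l+1) - 1) (i + (l+1) + 1) + 1) = C
    ring
termination_by l


/- ZMod 2 value lemmas -/
lemma valQ_mul (u v : ZMod 2) : (((u*v).val : ℚ)) = (u.val : ℚ) * v.val := by
  have h : ∀ u v : ZMod 2, (u*v).val = u.val * v.val := by decide
  rw [h]; push_cast; ring

lemma valQ_add_one (u : ZMod 2) : (((u+1).val : ℚ)) = 1 - (u.val : ℚ) := by
  have h : ∀ u : ZMod 2, (u+1).val + u.val = 1 := by decide
  have h2 := congrArg (Nat.cast : ℕ → ℚ) (h u)
  push_cast at h2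
  linarith

lemma valQ_prod {ι : Type*} [DecidableEq ι] (s : Finset ι) (g : ι → ZMod 2) :
    (((∏ j ∈ s, g j).val : ℚ)) = ∏ j ∈ s, ((g j).val : ℚ) := by
  induction s using Finset.cons_induction with
  | empty => norm_num [show (1 : ZMod 2).val = 1 from rfl]
  | cons j s hj ih => rw [Finset.prod_cons, Finset.prod_cons, valQ_mul, ih]

lemma sum_val_zmod2 (c : ZMod 2) : ∑ b : ZMod 2, ((b + c).val : ℚ) = 1 := by
  have key : ∀ g : ZMod 2 → ℚ, ∑ b : ZMod 2, g b = g 0 + g 1 := fun g => by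
    show ∑ b : Fin 2, g b = _
    exact Fin.sum_univ_two (f := fun b : Fin 2 => g b)
  rw [key]
  have h : ∀ c : ZMod 2, (0 + c).val + (1 + c).val = 1 := by decide
  have h2 := congrArg (Nat.cast : ℕ → ℚ) (h c)
  push_cast at h2
  linarith


/- splitting a sum over the hypercube along a set of coordinates -/
lemma split {n : ℕ} (S : Finset (Fin n)) (g h : (Fin n → ZMod 2) → ℚ)
    (hg : ∀ x y, (∀ j ∈ S, x j = y j) → g x = g y)
    (hh : ∀ x y, (∀ j ∉ S, x j = y j) → h x = h y) :
    (2^n : ℚ) * ∑ x : Fin n → ZMod 2, g x * h x =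
      (∑ x : Fin n → ZMod 2, g x) * (∑ x : Fin n → ZMod 2, h x) := by
  classical
  set e := (Equiv.piEquivPiSubtypeProd (fun j : Fin n => j ∈ S) (fun _ => ZMod 2)).symm
    with he
  have hmem : ∀ (u : {j : Fin n // j ∈ S} → ZMod 2) (v : {j : Fin n // j ∉ S} → ZMod 2)
      (j : Fin n), (e (u, v)) j = if hj : j ∈ S then u ⟨j, hj⟩ else v ⟨j, hj⟩ := by
    intro u v j
    simp [he, Equiv.piEquivPiSubtypeProd]
  have hgu : ∀ u v v', g (e (u, v)) = g (e (u, v')) := by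
    intro u v v'
    apply hg
    intro j hj
    rw [hmem, hmem]
    simp [hj]
  have hhv : ∀ u u' v, h (e (u, v)) = h (e (u', v)) := by
    intro u u' v
    apply hh
    intro j hj
    rw [hmem, hmem]
    simp [hj]
  have key : ∀ F : (Fin n → ZMod 2) → ℚ, ∑ x : Fin n → ZMod 2, F x
      = ∑ u : {j : Fin n // j ∈ S} → ZMod 2, ∑ v : {j : Fin n // j ∉ S} → ZMod 2,
          F (e (u, v)) := by
    intro F
    rw [← Equiv.sum_comp e F, Fintype.sum_prod_type]
  have cardS : Fintype.card ({j : Fin n // j ∈ S} → ZMod 2) = 2 ^ S.card := by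
    simp [Fintype.card_fun]
  have cardSc : Fintype.card ({j : Fin n // j ∉ S} → ZMod 2) = 2 ^ (n - S.card) := by
    rw [Fintype.card_fun]
    congr 1
    rw [Fintype.card_subtype_compl]
    simp
  have hSle : S.card ≤ n := by simpa using Finset.card_le_univ S
  rw [key (fun x => g x * h x), key g, key h]
  have hg' : ∀ u v, g (e (u, v)) = g (e (u, 0)) := fun u v => hgu u v 0
  have hh' : ∀ u v, h (e (u, v)) = h (e (0, v)) := fun u v => hhv u 0 v
  calc (2^n : ℚ) * ∑ u, ∑ v, g (e (u,v)) * h (e (u,v))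
      = (2^n : ℚ) * ∑ u, ∑ v, g (e (u,0)) * h (e (0,v)) := by
        congr 1; apply Finset.sum_congr rfl; intro u _
        apply Finset.sum_congr rfl; intro v _
        rw [hg' u v, hh' u v]
    _ = (2^n : ℚ) * ((∑ u, g (e (u,0))) * (∑ v, h (e (0,v)))) := by
        rw [← Finset.sum_mul_sum]
    _ = ((2:ℚ)^(n - S.card) * ∑ u, g (e (u,0))) * ((2:ℚ)^S.card * ∑ v, h (e (0,v))) := by
        have hpow : (2:ℚ)^(n - S.card) * (2:ℚ)^S.card = 2^n := by
          rw [← pow_add, Nat.sub_add_cancel hSle]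
        rw [← hpow]; ring
    _ = (∑ u, ∑ v, g (e (u,v))) * (∑ u, ∑ v, h (e (u,v))) := by
        congr 1
        · rw [Finset.sum_comm]
          rw [Finset.sum_congr rfl (fun v _ => Finset.sum_congr rfl (fun u _ => hg' u v)),
            Finset.sum_const, Finset.card_univ, cardSc]
          push_cast; ring
        · rw [Finset.sum_congr rfl (fun u _ => Finset.sum_congr rfl (fun v _ => hh' u v))]
          rw [Finset.sum_const, Finset.card_univ, cardS]
          push_cast; ring

/- sum of an indicator product over the hypercube -/
lemma sum_prod_val {n : ℕ} (S : Finset (Fin n)) (a : Fin n → ZMod 2) :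
    ∑ x : Fin n → ZMod 2, ∏ j ∈ S, ((x j + a j).val : ℚ)
      = 2^n * (1/2 : ℚ)^S.card := by
  classical
  have step1 : ∀ x : Fin n → ZMod 2, ∏ j ∈ S, ((x j + a j).val : ℚ)
      = ∏ j : Fin n, (if j ∈ S then ((x j + a j).val : ℚ) else 1) := by
    intro x
    rw [Finset.prod_ite_mem, Finset.univ_inter]
  simp only [step1]
  rw [← Fintype.prod_sum (fun (j : Fin n) (b : ZMod 2) =>
    if j ∈ S then ((b + a j).val : ℚ) else 1)]
  have step2 : ∀ j : Fin n, (∑ b : ZMod 2, if j ∈ S then ((b + a j).val : ℚ) else 1)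
      = if j ∈ S then 1 else 2 := by
    intro j
    by_cases hj : j ∈ S
    · simp only [hj, if_true]; exact sum_val_zmod2 (a j)
    · simp [hj]
  rw [Finset.prod_congr rfl (fun j _ => step2 j)]
  have hSle : S.card ≤ n := by simpa using Finset.card_le_univ S
  rw [Finset.prod_ite, Finset.prod_const, Finset.prod_const, one_pow, one_mul]
  have hfilt : (Finset.univ.filter (fun j : Fin n => j ∉ S)).card = n - S.card := by
    rw [Finset.filter_not, Finset.filter_mem_eq_inter, Finset.univ_inter]
    rw [Finset.card_sdiff_of_subset (Finset.subset_univ S)]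
    simp
  rw [hfilt, one_div, inv_pow, eq_mul_inv_iff_mul_eq₀ (by positivity),
    ← pow_add, Nat.sub_add_cancel hSle]


section Layer
variable {n r : ℕ} (L : Fin n → Fin r) (a : Fin n → ZMod 2)

lemma layerMon_congr (t : ℕ) (x y : Fin n → ZMod 2)
    (hxy : ∀ j, (L j : ℕ) = t → x j = y j) : layerMon L a t x = layerMon L a t y :=
  Finset.prod_congr rfl (fun j hj => by
    rw [hxy j (Finset.mem_filter.mp hj).2])

lemma layerMon_update (t : ℕ) (i : Fin n) (c : ZMod 2) (x : Fin n → ZMod 2)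
    (hti : t ≠ (L i : ℕ)) :
    layerMon L a t (Function.update x i c) = layerMon L a t x := by
  apply layerMon_congr
  intro j hj
  have hji : j ≠ i := fun hje => hti (by rw [← hj, hje])
  exact Function.update_of_ne hji c x

lemma layerMon_flip (i : Fin n) (x : Fin n → ZMod 2) :
    layerMon L a (L i : ℕ) (Function.update x i (x i + 1)) + layerMon L a (L i : ℕ) x
      = ∏ j ∈ (Finset.univ.filter (fun j : Fin n => (L j : ℕ) = (L i : ℕ))).erase i,
          (x j + a j) := by
  classical
  have hi : i ∈ Finset.univ.filter (fun j : Fin n => (L j : ℕ) = (L i : ℕ)) := by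
    simp
  unfold layerMon
  rw [← Finset.mul_prod_erase _ _ hi, ← Finset.mul_prod_erase _
    (fun j => x j + a j) hi]
  have herase : ∀ j ∈ (Finset.univ.filter
      (fun j : Fin n => (L j : ℕ) = (L i : ℕ))).erase i,
      Function.update x i (x i + 1) j + a j = x j + a j := by
    intro j hj
    rw [Function.update_of_ne (Finset.ne_of_mem_erase hj)]
  rw [Finset.prod_congr rfl herase, Function.update_self]
  have : ∀ u v P : ZMod 2, (u + 1 + v) * P + (u + v) * P = P := by decide
  exact this (x i) (a i) _

/-- nests only depend on high-layer coordinates -/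
lemma nest_high_congr (t s : ℕ) (x y : Fin n → ZMod 2)
    (hxy : ∀ j, s ≤ (L j : ℕ) → x j = y j) :
    nestVal (fun u => layerMon L a u x) t s = nestVal (fun u => layerMon L a u y) t s :=
  nestVal_congr _ _ t s (fun u hu _ =>
    layerMon_congr L a u x y (fun j hj => hxy j (by omega)))


lemma prod_range_layerMon (l : ℕ) (x : Fin n → ZMod 2) :
    ∏ t ∈ Finset.range l, layerMon L a t x
      = ∏ j ∈ Finset.univ.filter (fun j : Fin n => (L j : ℕ) < l), (x j + a j) := by
  classical
  rw [← Finset.prod_fiberwise_of_maps_to (g := fun j : Fin n => (L j : ℕ))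
    (t := Finset.range l)
    (fun j hj => Finset.mem_range.mpr (Finset.mem_filter.mp hj).2) (fun j => x j + a j)]
  apply Finset.prod_congr rfl
  intro t ht
  unfold layerMon
  apply Finset.prod_congr _ (fun _ _ => rfl)
  ext j
  simp only [Finset.mem_filter, Finset.mem_univ, true_and]
  have htl : t < l := Finset.mem_range.mp ht
  omega

lemma deriv_eq (f : (Fin n → ZMod 2) → ZMod 2) (b : ZMod 2)
    (hf : ∀ x : Fin n → ZMod 2, f x = nestVal (fun s => layerMon L a s x) r 0 + b)
    (i : Fin n) (x : Fin n → ZMod 2) :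
    f (Function.update x i (x i + 1)) + f x =
      (∏ j ∈ (Finset.univ.filter
          (fun j : Fin n => (L j : ℕ) ≤ (L i : ℕ))).erase i, (x j + a j)) *
        (nestVal (fun s => layerMon L a s x) (r - (L i : ℕ) - 1) ((L i : ℕ) + 1) + 1) := by
  classical
  have hlr : (L i : ℕ) < r := (L i).isLt
  rw [hf, hf]
  have hb : ∀ u v c : ZMod 2, (u + c) + (v + c) = u + v := by decide
  rw [hb]
  have hdiff := nest_diff (fun s => layerMon L a s x)
    (fun s => layerMon L a s (Function.update x i (x i + 1))) (L i : ℕ) r 0 hlr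
    (fun t ht => layerMon_update L a t i (x i + 1) x (by omega))
  simp only [zero_add] at hdiff
  rw [hdiff, layerMon_flip, prod_range_layerMon]
  have hdisj : Disjoint (Finset.univ.filter (fun j : Fin n => (L j : ℕ) < (L i : ℕ)))
      ((Finset.univ.filter (fun j : Fin n => (L j : ℕ) = (L i : ℕ))).erase i) := by
    rw [Finset.disjoint_left]
    intro j hj hj'
    have h1 := (Finset.mem_filter.mp hj).2
    have h2 := (Finset.mem_filter.mp (Finset.mem_of_mem_erase hj')).2
    omega
  rw [← Finset.prod_union hdisj]
  have hset : (Finset.univ.filter (fun j : Fin n => (L j : ℕ) < (L i : ℕ))) ∪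
      ((Finset.univ.filter (fun j : Fin n => (L j : ℕ) = (L i : ℕ))).erase i)
      = (Finset.univ.filter (fun j : Fin n => (L j : ℕ) ≤ (L i : ℕ))).erase i := by
    ext j
    simp only [Finset.mem_union, Finset.mem_erase, Finset.mem_filter, Finset.mem_univ,
      true_and]
    constructor
    · rintro (h | ⟨hne, h⟩)
      · exact ⟨fun hji => by rw [hji] at h; omega, by omega⟩
      · exact ⟨hne, by omega⟩
    · rintro ⟨hne, h⟩
      rcases Nat.lt_or_ge (L j : ℕ) (L i : ℕ) with h' | h'
      · exact Or.inl h'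
      · exact Or.inr ⟨hne, by omega⟩
  rw [hset]

lemma card_cube : (Finset.univ : Finset (Fin n → ZMod 2)).card = 2^n := by
  rw [Finset.card_univ]
  simp [Fintype.card_fun]

lemma sum_layerMon (t : ℕ) :
    ∑ x : Fin n → ZMod 2, ((layerMon L a t x).val : ℚ)
      = 2^n * (1/2 : ℚ)^(layerSize L t) := by
  classical
  have hpt : ∀ x : Fin n → ZMod 2, ((layerMon L a t x).val : ℚ)
      = ∏ j ∈ Finset.univ.filter (fun j : Fin n => (L j : ℕ) = t), ((x j + a j).val : ℚ) :=
    fun x => valQ_prod _ _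
  rw [Finset.sum_congr rfl (fun x _ => hpt x), sum_prod_val]
  rfl

lemma sum_nest (t : ℕ) :
    ∑ x : Fin n → ZMod 2,
        ((nestVal (fun s => layerMon L a s x) (r - t) t + 1).val : ℚ)
      = 2^n * Q (layerSize L) r t := by
  classical
  rcases le_or_gt r t with h | h
  · have h0 : r - t = 0 := by omega
    rw [h0, Q_of_ge _ _ _ h]
    have : ∀ x : Fin n → ZMod 2,
        ((nestVal (fun s => layerMon L a s x) 0 t + 1).val : ℚ) = 1 := by
      intro x
      show (((0 : ZMod 2) + 1).val : ℚ) = 1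
      rw [show ((0:ZMod 2)+1).val = 1 from rfl, Nat.cast_one]
    rw [Finset.sum_congr rfl (fun x _ => this x), Finset.sum_const, card_cube]
    simp
  · rw [Q_of_lt _ _ _ h]
    have h1 : 1 ≤ r - t := by omega
    have hval : ∀ x : Fin n → ZMod 2,
        ((nestVal (fun s => layerMon L a s x) (r - t) t + 1).val : ℚ)
          = 1 - ((layerMon L a t x).val : ℚ) *
            ((nestVal (fun s => layerMon L a s x) (r - t - 1) (t+1) + 1).val : ℚ) := by
      intro x
      rw [nestVal_eq_mul _ _ _ h1, valQ_add_one, valQ_mul]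
    rw [Finset.sum_congr rfl (fun x _ => hval x), Finset.sum_sub_distrib,
      Finset.sum_const, card_cube]
    have hg : ∀ x y : Fin n → ZMod 2,
        (∀ j ∈ Finset.univ.filter (fun j : Fin n => (L j : ℕ) = t), x j = y j) →
        ((layerMon L a t x).val : ℚ) = ((layerMon L a t y).val : ℚ) := by
      intro x y hxy
      rw [layerMon_congr L a t x y (fun j hj => hxy j (by simp [hj]))]
    have hh : ∀ x y : Fin n → ZMod 2,
        (∀ j ∉ Finset.univ.filter (fun j : Fin n => (L j : ℕ) = t), x j = y j) →
        ((nestVal (fun s => layerMon L a s x) (r - t - 1) (t+1) + 1).val : ℚ)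
          = ((nestVal (fun s => layerMon L a s y) (r - t - 1) (t+1) + 1).val : ℚ) := by
      intro x y hxy
      rw [nest_high_congr L a (r - t - 1) (t+1) x y
        (fun j hj => hxy j (by simp; omega))]
    have hsplit := split (Finset.univ.filter (fun j : Fin n => (L j : ℕ) = t))
      (fun x => ((layerMon L a t x).val : ℚ))
      (fun x => ((nestVal (fun s => layerMon L a s x) (r - t - 1) (t+1) + 1).val : ℚ))
      hg hh
    have hrec := sum_nest (t+1)
    have hrt : r - (t+1) = r - t - 1 := by omega
    rw [hrt] at hrec
    rw [sum_layerMon, hrec] at hsplit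
    have h2n : (0:ℚ) < 2^n := by positivity
    have h3 : (2^n:ℚ) * (∑ x : Fin n → ZMod 2, ((layerMon L a t x).val : ℚ) *
        ((nestVal (fun s => layerMon L a s x) (r - t - 1) (t+1) + 1).val : ℚ))
        = 2^n * (2^n * ((1/2:ℚ)^(layerSize L t) * Q (layerSize L) r (t+1))) := by
      rw [hsplit]; ring
    have h4 := mul_left_cancel₀ (ne_of_gt h2n) h3
    rw [h4]
    simp
    ring
termination_by r - t
decreasing_by omega

lemma card_le_layer (l : ℕ) :
    (Finset.univ.filter (fun j : Fin n => (L j : ℕ) ≤ l)).card = layerSum L (l+1) := by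
  classical
  rw [Finset.card_eq_sum_card_fiberwise
    (f := fun j : Fin n => (L j : ℕ)) (t := Finset.range (l+1))
    (fun j hj => Finset.mem_range.mpr (by
      have h2 : (L j : ℕ) ≤ l := by simpa using (Finset.mem_filter.mp hj).2
      show (L j : ℕ) < l + 1
      omega))]
  unfold layerSum layerSize
  apply Finset.sum_congr rfl
  intro b hb
  congr 1
  ext j
  simp only [Finset.mem_filter, Finset.mem_univ, true_and]
  have hbl : b < l + 1 := Finset.mem_range.mp hb
  omega

lemma activity_eq (f : (Fin n → ZMod 2) → ZMod 2) (b : ZMod 2)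
    (hf : ∀ x : Fin n → ZMod 2, f x = nestVal (fun s => layerMon L a s x) r 0 + b)
    (i : Fin n) :
    activity f i = 2 * (1/2 : ℚ)^(layerSum L ((L i : ℕ) + 1)) *
      Q (layerSize L) r ((L i : ℕ) + 1) := by
  classical
  set l := (L i : ℕ) with hldef
  set S := (Finset.univ.filter (fun j : Fin n => (L j : ℕ) ≤ l)).erase i with hS
  unfold activity
  have hval : ∀ x : Fin n → ZMod 2,
      ((f (Function.update x i (x i + 1)) + f x).val : ℚ)
        = (∏ j ∈ S, ((x j + a j).val : ℚ)) *
          ((nestVal (fun s => layerMon L a s x) (r - l - 1) (l + 1) + 1).val : ℚ) := by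
    intro x
    rw [deriv_eq L a f b hf i x, valQ_mul, valQ_prod]
  rw [Finset.sum_congr rfl (fun x _ => hval x)]
  have hg : ∀ x y : Fin n → ZMod 2, (∀ j ∈ S, x j = y j) →
      (∏ j ∈ S, ((x j + a j).val : ℚ)) = ∏ j ∈ S, ((y j + a j).val : ℚ) :=
    fun x y hxy => Finset.prod_congr rfl (fun j hj => by rw [hxy j hj])
  have hh : ∀ x y : Fin n → ZMod 2, (∀ j ∉ S, x j = y j) →
      ((nestVal (fun s => layerMon L a s x) (r - l - 1) (l + 1) + 1).val : ℚ)
        = ((nestVal (fun s => layerMon L a s y) (r - l - 1) (l + 1) + 1).val : ℚ) := by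
    intro x y hxy
    have hagree : ∀ j : Fin n, l + 1 ≤ (L j : ℕ) → x j = y j := by
      intro j hj
      apply hxy
      simp only [hS, Finset.mem_erase, Finset.mem_filter, Finset.mem_univ, true_and]
      rintro ⟨-, hj2⟩
      omega
    rw [nest_high_congr L a (r - l - 1) (l+1) x y hagree]
  have hsplit := split S (fun x => ∏ j ∈ S, ((x j + a j).val : ℚ))
    (fun x => ((nestVal (fun s => layerMon L a s x) (r - l - 1) (l + 1) + 1).val : ℚ))
    hg hh
  have hsum1 : ∑ x : Fin n → ZMod 2, ∏ j ∈ S, ((x j + a j).val : ℚ)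
      = 2^n * (1/2 : ℚ)^S.card := sum_prod_val S a
  have hrt : r - (l+1) = r - l - 1 := by omega
  have hsum2 := sum_nest L a (l+1)
  rw [hrt] at hsum2
  rw [hsum1, hsum2] at hsplit
  have h2n : (0:ℚ) < 2^n := by positivity
  have hcard : S.card + 1 = layerSum L (l+1) := by
    rw [hS, Finset.card_erase_of_mem (by simp [hldef]), card_le_layer]
    have hpos : 1 ≤ layerSum L (l+1) := by
      rw [← card_le_layer]
      apply Finset.card_pos.mpr
      exact ⟨i, by simp [hldef]⟩
    omega
  have hpow : (1/2 : ℚ)^S.card = 2 * (1/2 : ℚ)^(layerSum L (l+1)) := by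
    rw [← hcard, pow_succ]
    ring
  have h3 : (2^n:ℚ) * (∑ x : Fin n → ZMod 2, (∏ j ∈ S, ((x j + a j).val : ℚ)) *
      ((nestVal (fun s => layerMon L a s x) (r - l - 1) (l + 1) + 1).val : ℚ))
      = 2^n * (2^n * ((1/2:ℚ)^S.card * Q (layerSize L) r (l+1))) := by
    rw [hsplit]; ring
  have h4 := mul_left_cancel₀ (ne_of_gt h2n) h3
  rw [h4, hpow]
  field_simp

end Layer
end St15

/-- For `n ≥ 3`, the layer activities of a nested canalizing function in
layered form are strictly decreasing: `A₁ > A₂ > ⋯ > A_r`, i.e. any variable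
in layer `l+1` has strictly smaller activity than any variable in layer `l`. -/
theorem statement15 {n r : ℕ} (hn : 3 ≤ n) (f : (Fin n → ZMod 2) → ZMod 2)
    (L : Fin n → Fin r) (a : Fin n → ZMod 2) (b : ZMod 2)
    (h : IsLayeredForm f L a b)
    (l : ℕ) (hl : l + 1 < r) (i i' : Fin n)
    (hi : (L i : ℕ) = l) (hi' : (L i' : ℕ) = l + 1) :
    activity f i' < activity f i := by
  obtain ⟨hr1, hk, hlast, hf⟩ := h
  have hA1 := St15.activity_eq L a f b hf i
  have hA2 := St15.activity_eq L a f b hf i'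
  rw [hi] at hA1
  rw [hi'] at hA2
  rw [hA1, hA2]
  have hsum : layerSum L (l+1+1) = layerSum L (l+1) + layerSize L (l+1) :=
    Finset.sum_range_succ _ _
  have hk'' : ∀ s, s < r → 1 ≤ layerSize L s := by
    intro s hs
    simpa using hk ⟨s, hs⟩
  have hQ : St15.Q (layerSize L) r (l+1)
      = 1 - (1/2:ℚ)^(layerSize L (l+1)) * St15.Q (layerSize L) r (l+1+1) :=
    St15.Q_of_lt _ _ _ hl
  set q := St15.Q (layerSize L) r (l+1+1) with hqdef
  set kk := layerSize L (l+1) with hkkdef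
  set K := layerSum L (l+1) with hKdef
  obtain ⟨hq0, hq1⟩ := St15.Q_nonneg_le_one (layerSize L) r (l+1+1)
  rw [← hqdef] at hq0 hq1
  have hkk1 : 1 ≤ kk := hk'' (l+1) hl
  have hp0 : (0:ℚ) < (1/2:ℚ)^kk := by positivity
  have core : 2 * (1/2:ℚ)^kk * q < 1 := by
    by_cases hc : l + 1 + 1 < r
    · have hqlt : q < 1 := St15.Q_lt_one _ _ _ hc hk''
      have hp : (1/2:ℚ)^kk ≤ 1/2 := by
        calc (1/2:ℚ)^kk ≤ (1/2:ℚ)^1 :=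
              pow_le_pow_of_le_one (by norm_num) (by norm_num) hkk1
          _ = 1/2 := pow_one _
      nlinarith
    · have hqe : q = 1 := St15.Q_of_ge _ _ _ (by omega)
      have hkk2 : 2 ≤ kk := by
        rw [hkkdef, show l + 1 = r - 1 by omega]
        exact hlast
      have hp : (1/2:ℚ)^kk ≤ (1/2:ℚ)^2 :=
        pow_le_pow_of_le_one (by norm_num) (by norm_num) hkk2
      rw [hqe]
      nlinarith
  rw [hQ, hsum, pow_add]
  have hP : (0:ℚ) < (1/2:ℚ)^K := by positivity
  nlinarith [mul_lt_mul_of_pos_left core hP]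
end

section
/- Let n ≥ 3 and let f : 𝔽₂ⁿ → 𝔽₂ be a nested canalizing function. Then the average sensitivity of f satisfies n/2^{n−1} ≤ s^f < 2 − 1/2^{n−2}. Moreover, the lower bound n/2^{n−1} is attained exactly by the nested canalizing functions with layer number 1. -/
set_option maxHeartbeats 1000000


namespace S16


lemma zsum (h : ZMod 2 → ℚ) : ∑ v : ZMod 2, h v = h 0 + h 1 :=
  Fin.sum_univ_two h

lemma val_mul_q (p q : ZMod 2) : (((p*q).val : ℚ)) = (p.val : ℚ) * q.val := by
  have : (p*q).val = p.val * q.val := by revert p q; decide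
  rw [this]; push_cast; ring

lemma val_addone_q (p : ZMod 2) : (((p+1).val : ℚ)) = 1 - (p.val : ℚ) := by
  have : ((p+1).val : ℤ) = 1 - (p.val : ℤ) := by revert p; decide
  have := congrArg (fun z : ℤ => (z : ℚ)) this
  push_cast at this ⊢; linarith

lemma val_flip (u a : ZMod 2) : (((u + a).val : ℚ)) + ((u + 1 + a).val : ℚ) = 1 := by
  have : ((u+a).val : ℤ) + ((u+1+a).val : ℤ) = 1 := by revert u a; decide
  have := congrArg (fun z : ℤ => (z : ℚ)) this
  push_cast at this ⊢; linarith

lemma val_le_one (p : ZMod 2) : ((p.val : ℚ)) ≤ 1 := by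
  have : p.val ≤ 1 := by revert p; decide
  exact_mod_cast this

lemma val_nonneg_q (p : ZMod 2) : (0:ℚ) ≤ p.val := by positivity

lemma val_prod_q {n : ℕ} (S : Finset (Fin n)) (c : Fin n → ZMod 2) :
    (((∏ j ∈ S, c j).val : ℚ)) = ∏ j ∈ S, ((c j).val : ℚ) := by
  induction S using Finset.cons_induction with
  | empty => norm_num [ZMod.val_one]
  | cons j S hj ih => rw [Finset.prod_cons, Finset.prod_cons, val_mul_q, ih]

lemma card_cube (n : ℕ) : ((Finset.univ : Finset (Fin n → ZMod 2)).card : ℚ) = 2 ^ n := by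
  rw [Finset.card_univ]
  simp [Fintype.card_pi]

lemma sum_one_cube (n : ℕ) : ∑ _x : Fin n → ZMod 2, (1:ℚ) = 2 ^ n := by
  rw [Finset.sum_const, nsmul_eq_mul, mul_one, card_cube]


lemma sum_prod_eval {n : ℕ} (S : Finset (Fin n)) (g : Fin n → ZMod 2 → ℚ) :
    ∑ x : Fin n → ZMod 2, ∏ j ∈ S, g j (x j)
      = (∏ j ∈ S, (g j 0 + g j 1)) * 2 ^ (n - S.card) := by
  have h1 : ∀ x : Fin n → ZMod 2, ∏ j ∈ S, g j (x j)
      = ∏ j, (if j ∈ S then g j (x j) else 1) := by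
    intro x
    rw [Finset.prod_ite_mem, Finset.univ_inter]
  simp only [h1]
  rw [← Fintype.prod_sum (fun j v => if j ∈ S then g j v else 1)]
  have h2 : ∀ j : Fin n, (∑ v : ZMod 2, if j ∈ S then g j v else 1)
      = if j ∈ S then (g j 0 + g j 1) else 2 := by
    intro j
    by_cases h : j ∈ S <;> simp [h, zsum]
  simp only [h2]
  rw [← Finset.prod_filter_mul_prod_filter_not
    Finset.univ (· ∈ S) (fun j => if j ∈ S then (g j 0 + g j 1) else (2:ℚ))]
  have hfil : Finset.univ.filter (· ∈ S) = S := by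
    ext j; simp
  have hfil2 : (Finset.univ.filter (fun j => ¬ j ∈ S)).card = n - S.card := by
    rw [Finset.filter_not, hfil]
    simp [Finset.card_sdiff_of_subset (Finset.subset_univ S)]
  rw [hfil]
  congr 1
  · exact Finset.prod_congr rfl fun j hj => by simp [hj]
  · rw [Finset.prod_congr rfl (fun j hj => by
      simp only [Finset.mem_filter] at hj; simp [hj.2] : ∀ j ∈ Finset.univ.filter (fun j => ¬ j ∈ S),
        (if j ∈ S then (g j 0 + g j 1) else (2:ℚ)) = 2), Finset.prod_const, hfil2]



lemma sum_mul_indep {n : ℕ} (p : Fin n → Prop) [DecidablePred p]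
    (F G : (Fin n → ZMod 2) → ℚ)
    (hF : ∀ x y, (∀ j, p j → x j = y j) → F x = F y)
    (hG : ∀ x y, (∀ j, ¬ p j → x j = y j) → G x = G y) :
    (∑ x : Fin n → ZMod 2, F x * G x) * 2 ^ n
      = (∑ x : Fin n → ZMod 2, F x) * (∑ x : Fin n → ZMod 2, G x) := by
  classical
  set e := (Equiv.piEquivPiSubtypeProd p fun _ => ZMod 2).symm with he
  have key : ∀ (u : ∀ _ : {j // p j}, ZMod 2) (v : ∀ _ : {j // ¬ p j}, ZMod 2),
      F (e (u, v)) = F (e (u, 0)) ∧ G (e (u, v)) = G (e (0, v)) := by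
    intro u v
    constructor
    · apply hF; intro j hj
      simp [he, Equiv.piEquivPiSubtypeProd_symm_apply, dif_pos hj]
    · apply hG; intro j hj
      simp [he, Equiv.piEquivPiSubtypeProd_symm_apply, dif_neg hj]
  have hFG : ∑ x : Fin n → ZMod 2, F x * G x
      = (∑ u, F (e (u, 0))) * (∑ v, G (e (0, v))) := by
    rw [← Equiv.sum_comp e (fun x => F x * G x), Fintype.sum_prod_type]
    rw [Finset.sum_mul_sum]
    refine Finset.sum_congr rfl fun u _ => Finset.sum_congr rfl fun v _ => ?_
    rw [(key u v).1, (key u v).2]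
  have cardpi : ∀ (q : Fin n → Prop) [DecidablePred q],
      Fintype.card (∀ _ : {j // q j}, ZMod 2) = 2 ^ (Fintype.card {j // q j}) := by
    intro q _; simp [Fintype.card_pi]
  have hFs : ∑ x : Fin n → ZMod 2, F x
      = (2 : ℚ) ^ (Fintype.card {j // ¬ p j}) * ∑ u, F (e (u, 0)) := by
    rw [← Equiv.sum_comp e F, Fintype.sum_prod_type]
    have : ∀ u, ∑ v, F (e (u, v)) = (2:ℚ) ^ (Fintype.card {j // ¬ p j}) * F (e (u, 0)) := by
      intro u
      rw [Finset.sum_congr rfl (fun v _ => (key u v).1), Finset.sum_const]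
      simp [cardpi, mul_comm]
    rw [Finset.sum_congr rfl fun u _ => this u, ← Finset.mul_sum]
  have hGs : ∑ x : Fin n → ZMod 2, G x
      = (2 : ℚ) ^ (Fintype.card {j // p j}) * ∑ v, G (e (0, v)) := by
    rw [← Equiv.sum_comp e G, Fintype.sum_prod_type]
    have : ∀ u v, G (e (u, v)) = G (e (0, v)) := fun u v => (key u v).2
    simp only [this]
    rw [Finset.sum_const]
    simp [cardpi, mul_comm]
  have hcard : Fintype.card {j // p j} + Fintype.card {j // ¬ p j} = n := by
    rw [Fintype.card_subtype_compl]
    have := Fintype.card_subtype_le p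
    simp only [Fintype.card_fin] at *
    omega
  have hpow : (2:ℚ) ^ (Fintype.card {j // ¬ p j}) * 2 ^ (Fintype.card {j // p j}) = 2 ^ n := by
    rw [← pow_add, add_comm, hcard]
  rw [hFG, hFs, hGs, ← hpow]
  ring

lemma nestVal_succ (M : ℕ → ZMod 2) (t i : ℕ) :
    nestVal M (t+1) i = M i * (nestVal M t (i+1) + 1) := by
  cases t with
  | zero => show M i = M i * (0 + 1); rw [zero_add, mul_one]
  | succ t => rfl



lemma layerMon_congr {n r : ℕ} (L : Fin n → Fin r) (a : Fin n → ZMod 2) {x y : Fin n → ZMod 2} (i : ℕ)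
    (h : ∀ j, (L j : ℕ) = i → x j = y j) : layerMon L a i x = layerMon L a i y :=
  Finset.prod_congr rfl fun j hj => by
    rw [h j (by simpa using (Finset.mem_filter.mp hj).2)]

lemma nestVal_congr {n r : ℕ} (L : Fin n → Fin r) (a : Fin n → ZMod 2) {x y : Fin n → ZMod 2} : ∀ (t l : ℕ),
    (∀ j, l ≤ (L j : ℕ) → x j = y j) →
    nestVal (fun i => layerMon L a i x) t l = nestVal (fun i => layerMon L a i y) t l := by
  intro t
  induction t with
  | zero => intro l h; rfl
  | succ t ih =>
    intro l h
    rw [nestVal_succ, nestVal_succ, ih (l+1) (fun j hj => h j (by omega)),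
      layerMon_congr L a l (fun j hj => h j (by omega))]


variable {n r : ℕ} (L : Fin n → Fin r) (a : Fin n → ZMod 2)

/-- expectation of the nested value of layers `l, l+1, …, r-1`. -/
noncomputable def wq (l : ℕ) : ℚ :=
  (∑ x : Fin n → ZMod 2,
    ((nestVal (fun i => layerMon L a i x) (r - l) l).val : ℚ)) / 2 ^ n

lemma sum_prod_val (S : Finset (Fin n)) :
    ∑ x : Fin n → ZMod 2, ∏ j ∈ S, (((x j + a j).val : ℚ)) = 2 ^ (n - S.card) := by
  rw [sum_prod_eval S (fun j v => ((v + a j).val : ℚ))]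
  have : ∀ j ∈ S, (((0 + a j).val : ℚ)) + (((1:ZMod 2) + a j).val : ℚ) = 1 := by
    intro j _
    have := val_flip 0 (a j)
    simpa using this
  rw [Finset.prod_congr rfl this, Finset.prod_const_one, one_mul]

lemma pow_sub_div {k : ℕ} (hk : k ≤ n) : (2:ℚ) ^ (n - k) / 2 ^ n = (1/2) ^ k := by
  have h2 : (2:ℚ) ^ n = 2 ^ (n - k) * 2 ^ k := by
    rw [← pow_add]; congr 1; omega
  rw [h2, one_div, inv_pow]
  rw [div_mul_eq_div_div, div_self (by positivity), one_div]

lemma wq_r : wq L a r = 0 := by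
  simp [wq, Nat.sub_self, nestVal]

lemma layerSize_le (i : ℕ) : layerSize L i ≤ n := by
  have := Finset.card_le_univ (Finset.univ.filter (fun j : Fin n => (L j : ℕ) = i))
  simpa [layerSize] using this

lemma wq_rec (l : ℕ) (hl : l < r) :
    wq L a l = (1/2) ^ (layerSize L l) * (1 - wq L a (l+1)) := by
  have hsplit : r - l = (r - (l+1)) + 1 := by omega
  have hval : ∀ x : Fin n → ZMod 2,
      ((nestVal (fun i => layerMon L a i x) (r - l) l).val : ℚ)
      = ((layerMon L a l x).val : ℚ)
        * (1 - ((nestVal (fun i => layerMon L a i x) (r - (l+1)) (l+1)).val : ℚ)) := by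
    intro x
    rw [hsplit, nestVal_succ, val_mul_q, val_addone_q]
  have hindep := sum_mul_indep (fun j => (L j : ℕ) = l)
    (fun x => ((layerMon L a l x).val : ℚ))
    (fun x => 1 - ((nestVal (fun i => layerMon L a i x) (r - (l+1)) (l+1)).val : ℚ))
    (fun x y h => by rw [layerMon_congr L a l h])
    (fun x y h => by
      rw [nestVal_congr L a (r - (l+1)) (l+1) (fun j hj => h j (by omega))])
  have hF : (∑ x : Fin n → ZMod 2, ((layerMon L a l x).val : ℚ))
      = 2 ^ (n - layerSize L l) := by
    have : ∀ x : Fin n → ZMod 2, ((layerMon L a l x).val : ℚ)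
        = ∏ j ∈ Finset.univ.filter (fun j : Fin n => (L j : ℕ) = l), (((x j + a j).val : ℚ)) := by
      intro x; exact val_prod_q _ _
    rw [Finset.sum_congr rfl (fun x _ => this x), sum_prod_val]
    rfl
  have hG : (∑ x : Fin n → ZMod 2,
      (1 - ((nestVal (fun i => layerMon L a i x) (r - (l+1)) (l+1)).val : ℚ)))
      = 2 ^ n * (1 - wq L a (l+1)) := by
    rw [Finset.sum_sub_distrib, sum_one_cube]
    rw [wq]
    field_simp
  have hsum : (∑ x : Fin n → ZMod 2, ((layerMon L a l x).val : ℚ)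
        * (1 - ((nestVal (fun i => layerMon L a i x) (r - (l+1)) (l+1)).val : ℚ)))
      = 2 ^ (n - layerSize L l) * (1 - wq L a (l+1)) := by
    apply mul_right_cancel₀ (by positivity : ((2:ℚ)^n) ≠ 0)
    rw [hindep, hF, hG]; ring
  rw [wq, Finset.sum_congr rfl (fun x _ => hval x), hsum, mul_comm, mul_div_assoc,
    pow_sub_div (layerSize_le L l), mul_comm]


lemma deriv_aux (v : Fin n) (x : Fin n → ZMod 2) :
    ∀ t, t ≤ (L v : ℕ) →
    nestVal (fun i => layerMon L a i (Function.update x v (x v + 1)))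
        (r - ((L v:ℕ) - t)) ((L v:ℕ) - t)
      + nestVal (fun i => layerMon L a i x) (r - ((L v:ℕ) - t)) ((L v:ℕ) - t)
    = (∏ m ∈ Finset.Ico ((L v:ℕ) - t) (L v:ℕ), layerMon L a m x)
      * ((∏ j ∈ (Finset.univ.filter (fun j : Fin n => (L j:ℕ) = (L v : ℕ))).erase v,
            (x j + a j))
        * (nestVal (fun i => layerMon L a i x) (r - ((L v:ℕ)+1)) ((L v:ℕ)+1) + 1)) := by
  set i := (L v : ℕ) with hi
  set x' := Function.update x v (x v + 1) with hx'
  have hir : i < r := (L v).isLt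
  have hx'ne : ∀ j : Fin n, j ≠ v → x' j = x j := fun j hj => Function.update_of_ne hj _ _
  intro t
  induction t with
  | zero =>
    intro _
    simp only [Nat.sub_zero, Finset.Ico_self, Finset.prod_empty, one_mul]
    have hsplit : r - i = (r - (i+1)) + 1 := by omega
    rw [hsplit, nestVal_succ, nestVal_succ]
    have hinner : nestVal (fun m => layerMon L a m x') (r-(i+1)) (i+1)
        = nestVal (fun m => layerMon L a m x) (r-(i+1)) (i+1) := by
      apply nestVal_congr
      intro j hj
      exact hx'ne j (by intro h; rw [h, ← hi] at hj; omega)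
    have hvmem : v ∈ Finset.univ.filter (fun j : Fin n => (L j:ℕ) = i) := by simp [hi]
    have hmon' : layerMon L a i x' = (x v + 1 + a v)
        * ∏ j ∈ (Finset.univ.filter (fun j : Fin n => (L j:ℕ) = i)).erase v, (x j + a j) := by
      rw [layerMon, ← Finset.mul_prod_erase _ _ hvmem]
      congr 1
      · rw [hx', Function.update_self]
      · exact Finset.prod_congr rfl fun j hj =>
          by rw [hx'ne j (Finset.ne_of_mem_erase hj)]
    have hmon : layerMon L a i x = (x v + a v)
        * ∏ j ∈ (Finset.univ.filter (fun j : Fin n => (L j:ℕ) = i)).erase v, (x j + a j) := by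
      rw [layerMon, ← Finset.mul_prod_erase _ _ hvmem]
    rw [hinner, hmon', hmon]
    have key : ∀ p q d e : ZMod 2, (p+1+q)*d*e + (p+q)*d*e = d*e := by decide
    exact key (x v) (a v) _ _
  | succ t ih =>
    intro ht
    by_cases htle : t + 1 ≤ i
    case neg =>
      omega
    have hlt : i - (t+1) < i := by omega
    set l := i - (t+1) with hl
    have hsucc : i - t = l + 1 := by omega
    have hlr : l < r := by omega
    have hsplit : r - l = (r - (l+1)) + 1 := by omega
    rw [hsplit, nestVal_succ, nestVal_succ]
    have hmon : layerMon L a l x' = layerMon L a l x := by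
      apply layerMon_congr
      intro j hj
      exact hx'ne j (by intro h; rw [h, ← hi] at hj; omega)
    have ihval := ih (by omega)
    rw [hsucc] at ihval
    have key : ∀ m p q : ZMod 2, m*(p+1) + m*(q+1) = m*(p+q) := by decide
    have hico : ∏ m ∈ Finset.Ico l i, layerMon L a m x
        = layerMon L a l x * ∏ m ∈ Finset.Ico (l+1) i, layerMon L a m x := by
      exact Finset.prod_eq_prod_Ico_succ_bot hlt _
    rw [hmon, key, ihval, hico]
    ring

lemma activity_eq (f : (Fin n → ZMod 2) → ZMod 2) (b : ZMod 2)
    (hform : ∀ x, f x = nestVal (fun i => layerMon L a i x) r 0 + b) (v : Fin n) :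
    activity f v
      = 2 * (1/2) ^ (layerSum L ((L v:ℕ)+1)) * (1 - wq L a ((L v:ℕ)+1)) := by
  classical
  set i := (L v : ℕ) with hi
  set T : Finset (Fin n) :=
    (Finset.univ.filter (fun j : Fin n => (L j:ℕ) < i))
      ∪ (Finset.univ.filter (fun j : Fin n => (L j:ℕ) = i)).erase v with hT
  -- pointwise identity
  have hcancel : ∀ p q c : ZMod 2, (p+c)+(q+c) = p + q := by decide
  have hdisj : Disjoint (Finset.univ.filter (fun j : Fin n => (L j:ℕ) < i))
        ((Finset.univ.filter (fun j : Fin n => (L j:ℕ) = i)).erase v) := by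
      rw [Finset.disjoint_left]
      intro j hj hj2
      have h1 := (Finset.mem_filter.mp hj).2
      have h2 := (Finset.mem_filter.mp (Finset.mem_of_mem_erase hj2)).2
      omega
  have hderiv : ∀ x : Fin n → ZMod 2,
      ((f (Function.update x v (x v + 1)) + f x).val : ℚ)
      = (∏ j ∈ T, (((x j + a j).val : ℚ)))
        * (1 - ((nestVal (fun m => layerMon L a m x) (r - (i+1)) (i+1)).val : ℚ)) := by
    intro x
    have hd := deriv_aux L a v x i le_rfl
    simp only [← hi, Nat.sub_self, Nat.sub_zero] at hd
    rw [hform, hform, hcancel, hd]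
    rw [val_mul_q, val_mul_q, val_addone_q]
    have hPval : (((∏ m ∈ Finset.Ico 0 i, layerMon L a m x).val : ℚ))
        = ∏ j ∈ Finset.univ.filter (fun j : Fin n => (L j:ℕ) < i), (((x j + a j).val : ℚ)) := by
      have hmap : ∀ j ∈ Finset.univ.filter (fun j : Fin n => (L j:ℕ) < i),
          (L j : ℕ) ∈ Finset.range i := by
        intro j hj; simp only [Finset.mem_filter] at hj; simp [hj.2]
      have hfib := Finset.prod_fiberwise_of_maps_to hmap (fun j => (x j + a j))
      have heq : ∏ m ∈ Finset.Ico 0 i, layerMon L a m x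
          = ∏ j ∈ Finset.univ.filter (fun j : Fin n => (L j:ℕ) < i), (x j + a j) := by
        rw [← hfib, ← Finset.range_eq_Ico]
        refine Finset.prod_congr rfl fun m hm => ?_
        rw [Finset.mem_range] at hm
        rw [layerMon, Finset.filter_filter]
        refine Finset.prod_congr ?_ fun _ _ => rfl
        ext j
        simp only [Finset.mem_filter, Finset.mem_univ, true_and]
        constructor
        · intro h; omega
        · intro h; omega
      rw [heq, val_prod_q]
    rw [hT, Finset.prod_union hdisj, ← hPval, ← val_prod_q]
    ring
  -- sum via independence
  have hvT : v ∉ T := by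
    rw [hT, Finset.mem_union]
    push_neg
    exact ⟨by simp [hi], Finset.notMem_erase v _⟩
  have hTi : ∀ j ∈ T, (L j : ℕ) ≤ i := by
    intro j hj
    rw [hT, Finset.mem_union] at hj
    rcases hj with hj | hj
    · have := (Finset.mem_filter.mp hj).2; omega
    · have := (Finset.mem_filter.mp (Finset.mem_of_mem_erase hj)).2; omega
  have hindep := sum_mul_indep (fun j => j ∈ T)
    (fun x => ∏ j ∈ T, (((x j + a j).val : ℚ)))
    (fun x => 1 - ((nestVal (fun m => layerMon L a m x) (r - (i+1)) (i+1)).val : ℚ))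
    (fun x y h => by
      exact Finset.prod_congr rfl fun j hj => by rw [h j hj])
    (fun x y h => by
      rw [nestVal_congr L a (r - (i+1)) (i+1)
        (fun j hj => h j (fun hmem => by have := hTi j hmem; omega))])
  have hFs := sum_prod_val a T
  have hGs : (∑ x : Fin n → ZMod 2,
      (1 - ((nestVal (fun m => layerMon L a m x) (r - (i+1)) (i+1)).val : ℚ)))
      = 2 ^ n * (1 - wq L a (i+1)) := by
    rw [Finset.sum_sub_distrib, sum_one_cube, wq]
    field_simp
  have hsum : (∑ x : Fin n → ZMod 2, (∏ j ∈ T, (((x j + a j).val : ℚ)))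
        * (1 - ((nestVal (fun m => layerMon L a m x) (r - (i+1)) (i+1)).val : ℚ)))
      = 2 ^ (n - T.card) * (1 - wq L a (i+1)) := by
    apply mul_right_cancel₀ (by positivity : ((2:ℚ)^n) ≠ 0)
    rw [hindep, hFs, hGs]; ring
  -- cardinality of T
  have hvmem : v ∈ Finset.univ.filter (fun j : Fin n => (L j:ℕ) = i) := by simp [hi]
  have hk1 : 1 ≤ layerSize L i := Finset.card_pos.mpr ⟨v, hvmem⟩
  have hflt : (Finset.univ.filter (fun j : Fin n => (L j:ℕ) < i)).card = layerSum L i := by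
    rw [layerSum, Finset.card_eq_sum_card_fiberwise
      (f := fun j => (L j : ℕ)) (t := Finset.range i)
      (fun j hj => by simpa using (Finset.mem_filter.mp hj).2)]
    refine Finset.sum_congr rfl fun m hm => ?_
    rw [Finset.mem_range] at hm
    rw [layerSize, Finset.filter_filter]
    congr 1
    ext j
    simp only [Finset.mem_filter, Finset.mem_univ, true_and]
    constructor
    · intro h; omega
    · intro h; omega
  have hcardT : T.card + 1 = layerSum L (i+1) := by
    rw [hT, Finset.card_union_of_disjoint hdisj, Finset.card_erase_of_mem hvmem, hflt]
    have : layerSum L (i+1) = layerSum L i + layerSize L i := Finset.sum_range_succ _ _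
    rw [this, layerSize]
    have : 1 ≤ (Finset.univ.filter (fun j : Fin n => (L j:ℕ) = i)).card := hk1
    omega
  have hTn : T.card ≤ n := by
    have := Finset.card_le_univ T
    simpa using this
  -- final computation
  rw [activity, Finset.sum_congr rfl (fun x _ => hderiv x), hsum]
  have h1 : (1:ℚ) / 2^n * (2 ^ (n - T.card) * (1 - wq L a (i+1)))
      = (1/2)^(T.card) * (1 - wq L a (i+1)) := by
    rw [← pow_sub_div hTn]; ring
  rw [h1]
  have h2 : ((1:ℚ)/2)^(T.card) = 2 * (1/2)^(layerSum L (i+1)) := by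
    rw [← hcardT, pow_succ]
    ring
  rw [h2]

lemma nat_lt1 (x : ℕ) : (x:ℚ) + 1 ≤ 2^x := by
  have := Nat.lt_two_pow_self (n := x)
  have : x + 1 ≤ 2^x := this
  exact_mod_cast this

lemma nat_lt2 (x : ℕ) (hx : 2 ≤ x) : (x:ℚ) + 2 ≤ 2^x := by
  have h : x + 2 ≤ 2^x := by
    induction x, hx using Nat.le_induction with
    | base => norm_num
    | succ x hx ih =>
      have h1 : 1 ≤ 2^x := Nat.one_le_two_pow
      rw [pow_succ]
      omega
  exact_mod_cast h

lemma nat_lt3 (m : ℕ) (hm : 3 ≤ m) : (m:ℚ) + 2 < 2^m := by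
  have h : m + 2 < 2^m := by
    induction m, hm using Nat.le_induction with
    | base => norm_num
    | succ m hm ih =>
      have h1 : 1 ≤ 2^m := Nat.one_le_two_pow
      rw [pow_succ]
      omega
  exact_mod_cast h

lemma half_pow_mul (x : ℕ) : ((1:ℚ)/2)^x * 2^x = 1 := by
  rw [← mul_pow]; norm_num

lemma ineq1 (x : ℕ) (hx : 1 ≤ x) : (x:ℚ) * (1/2)^x ≤ 1 - (1/2)^x := by
  have hp : (0:ℚ) < (1/2)^x := by positivity
  have h := mul_le_mul_of_nonneg_right (nat_lt1 x) hp.le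
  have h2 := half_pow_mul x
  nlinarith

lemma ineq2 (x : ℕ) (hx : 2 ≤ x) : (x:ℚ) * (1/2)^x ≤ 1 - 2*(1/2)^x := by
  have hp : (0:ℚ) < (1/2)^x := by positivity
  have h := mul_le_mul_of_nonneg_right (nat_lt2 x hx) hp.le
  have h2 := half_pow_mul x
  nlinarith

lemma ineq3 (m : ℕ) (hm : 3 ≤ m) : (m:ℚ) * (2 * (1/2)^m) < 2 - 4*(1/2)^m := by
  have hp : (0:ℚ) < (1/2)^m := by positivity
  have h := mul_lt_mul_of_pos_right (nat_lt3 m hm) hp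
  have h2 := half_pow_mul m
  nlinarith

lemma numeric_main {r n : ℕ} (k K : ℕ → ℕ) (w : ℕ → ℚ) (S : ℚ)
    (hn : 3 ≤ n) (hr : 1 ≤ r)
    (hK0 : K 0 = 0) (hKs : ∀ m, K (m+1) = K m + k m) (hKr : K r = n)
    (hk1 : ∀ m, m < r → 1 ≤ k m) (hklast : 2 ≤ k (r-1))
    (hwr : w r = 0) (hwrec : ∀ l, l < r → w l = (1/2)^(k l) * (1 - w (l+1)))
    (hS : S = ∑ m ∈ Finset.range r,
      (k m : ℚ) * (2 * (1/2)^(K (m+1)) * (1 - w (m+1)))) :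
    ((n : ℚ)/2^(n-1) ≤ S ∧ S < 2 - 1/2^(n-2)) ∧ (S = (n:ℚ)/2^(n-1) ↔ r = 1) := by
  -- w bounds
  have wb : ∀ j, j ≤ r → 0 ≤ w (r - j) ∧ w (r - j) ≤ 1/2 := by
    intro j
    induction j with
    | zero => intro _; rw [Nat.sub_zero, hwr]; norm_num
    | succ j ih =>
      intro hj
      have hl : r - (j+1) < r := by omega
      have hl1 : r - (j+1) + 1 = r - j := by omega
      have ihj := ih (by omega)
      rw [hwrec _ hl, hl1]
      have hk := hk1 _ hl
      have hp : (0:ℚ) < (1/2)^(k (r - (j+1))) := by positivity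
      have hple : ((1:ℚ)/2)^(k (r - (j+1))) ≤ (1/2)^1 :=
        pow_le_pow_of_le_one (by norm_num) (by norm_num) hk
      constructor
      · nlinarith [ihj.1, ihj.2]
      · nlinarith [ihj.1, ihj.2]
  have wbound : ∀ l, l ≤ r → 0 ≤ w l ∧ w l ≤ 1/2 := by
    intro l hl
    have := wb (r - l) (by omega)
    rwa [show r - (r - l) = l by omega] at this
  -- K facts
  have Kmono : ∀ p q, p ≤ q → K p ≤ K q := by
    intro p q hpq
    induction q, hpq using Nat.le_induction with
    | base => exact le_refl _
    | succ q hq ih => rw [hKs]; omega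
  have hKn : ∀ m, m ≤ r → K m ≤ n := fun m hm => hKr ▸ Kmono m r hm
  have hKsum : ∀ q, (K q : ℚ) = ∑ m ∈ Finset.range q, (k m : ℚ) := by
    intro q
    induction q with
    | zero => simp [hK0]
    | succ q ih => rw [hKs, Finset.sum_range_succ, ← ih]; push_cast; ring
  have hKr1 : K (r-1) + k (r-1) = n := by
    have := hKs (r-1)
    rw [show (r-1)+1 = r by omega] at this
    omega
  -- lower bound per-term
  have hterm_ge : ∀ m, m < r →
      (k m : ℚ) * (2 * (1/2)^n) ≤ (k m : ℚ) * (2 * (1/2)^(K (m+1)) * (1 - w (m+1))) := by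
    intro m hm
    have hkm : (1:ℚ) ≤ (k m : ℚ) := by exact_mod_cast hk1 m hm
    by_cases hlast : m = r - 1
    · subst hlast
      rw [show (r-1)+1 = r by omega, hKr, hwr]
      ring_nf
      exact le_refl _
    · have hmlt : m + 1 ≤ r - 1 := by omega
      have hK2 : K (m+1) + 2 ≤ n := by
        have := Kmono (m+1) (r-1) hmlt
        omega
      have hw := wbound (m+1) (by omega)
      have hpow : (4:ℚ) * (1/2)^n ≤ (1/2)^(K (m+1)) := by
        have : ((1:ℚ)/2)^n ≤ (1/2)^(K (m+1) + 2) :=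
          pow_le_pow_of_le_one (by norm_num) (by norm_num) hK2
        have h4 : ((1:ℚ)/2)^(K (m+1) + 2) = (1/2)^(K (m+1)) / 4 := by
          rw [pow_add]; ring
        rw [h4] at this
        linarith
      have hp : (0:ℚ) < (1/2)^n := by positivity
      have : 2 * (1/2:ℚ)^n ≤ (1/2)^(K (m+1)) * (1 - w (m+1)) := by
        nlinarith [hw.1, hw.2]
      nlinarith
  have hterm_gt : ∀ m, m < r - 1 →
      (k m : ℚ) * (2 * (1/2)^n) < (k m : ℚ) * (2 * (1/2)^(K (m+1)) * (1 - w (m+1))) := by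
    intro m hm
    have hkm : (1:ℚ) ≤ (k m : ℚ) := by exact_mod_cast hk1 m (by omega)
    have hmlt : m + 1 ≤ r - 1 := by omega
    have hK2 : K (m+1) + 2 ≤ n := by
      have := Kmono (m+1) (r-1) hmlt
      omega
    have hw := wbound (m+1) (by omega)
    have hpow : (4:ℚ) * (1/2)^n ≤ (1/2)^(K (m+1)) := by
      have : ((1:ℚ)/2)^n ≤ (1/2)^(K (m+1) + 2) :=
        pow_le_pow_of_le_one (by norm_num) (by norm_num) hK2
      have h4 : ((1:ℚ)/2)^(K (m+1) + 2) = (1/2)^(K (m+1)) / 4 := by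
        rw [pow_add]; ring
      rw [h4] at this
      linarith
    have hp : (0:ℚ) < (1/2)^n := by positivity
    have : 2 * (2 * (1/2:ℚ)^n) ≤ 2 * ((1/2)^(K (m+1)) * (1 - w (m+1))) := by
      nlinarith [hw.1, hw.2]
    nlinarith
  have hhalf : ((n:ℚ))/2^(n-1) = (n:ℚ) * (2 * (1/2)^n) := by
    have hp2 : (2:ℚ)^n = 2^(n-1) * 2 := by
      rw [← pow_succ]; congr 1; omega
    have hpn : (0:ℚ) < 2^(n-1) := by positivity
    rw [div_eq_iff (ne_of_gt hpn)]
    have := half_pow_mul n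
    symm
    calc (n:ℚ) * (2 * (1/2)^n) * 2^(n-1)
        = (n:ℚ) * ((1/2)^n * 2^n) := by rw [hp2]; ring
      _ = n := by rw [this, mul_one]
  have hsumk : ∑ m ∈ Finset.range r, (k m : ℚ) = n := by
    rw [← hKsum, hKr]
  -- lower bound
  have hlow : (n:ℚ)/2^(n-1) ≤ S := by
    rw [hhalf, hS, ← hsumk, Finset.sum_mul]
    exact Finset.sum_le_sum fun m hm => hterm_ge m (Finset.mem_range.mp hm)
  have hlow_strict : 2 ≤ r → (n:ℚ)/2^(n-1) < S := by
    intro hr2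
    rw [hhalf, hS, ← hsumk, Finset.sum_mul]
    apply Finset.sum_lt_sum (fun m hm => hterm_ge m (Finset.mem_range.mp hm))
    exact ⟨0, Finset.mem_range.mpr (by omega), hterm_gt 0 (by omega)⟩
  -- value at r = 1
  have hr1S : r = 1 → S = (n:ℚ) * (2 * (1/2)^n) := by
    intro h1
    subst h1
    rw [hS, Finset.sum_range_one, hwr, hKr]
    have hk0 : (k 0 : ℚ) = n := by
      have h2 : K 1 = k 0 := by simpa [hK0] using hKs 0
      have : k 0 = n := by rw [← h2]; exact hKr
      exact_mod_cast this
    rw [hk0]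
    ring
  -- `2 - 1/2^(n-2) = 2 - 4*(1/2)^n`
  have h2eq : (1:ℚ)/2^(n-2) = 4*(1/2)^n := by
    have hinv : ((1:ℚ)/2)^n = 1/2^n := by rw [div_pow, one_pow]
    rw [hinv, show (4:ℚ)*(1/2^n) = 4/2^n by ring,
      div_eq_div_iff (by positivity) (by positivity), one_mul,
      show (4:ℚ) = 2^2 by norm_num, ← pow_add, show 2+(n-2) = n by omega]
  -- upper bound
  have hupper : S < 2 - 1/2^(n-2) := by
    rcases Nat.lt_or_ge r 2 with hr2 | hr2
    · have h1 : r = 1 := by omega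
      rw [hr1S h1, h2eq]
      exact ineq3 n hn
    · obtain ⟨r', rfl⟩ : ∃ r', r = r' + 1 := ⟨r - 1, by omega⟩
      have hr'1 : 1 ≤ r' := by omega
      set A : ℕ → ℚ := fun l => ∑ m ∈ Finset.Ico l (r'+1),
        (k m:ℚ)*((1/2)^(K (m+1))*(1-w (m+1))) with hA
      have hSA : S = 2 * A 0 := by
        rw [hS, Finset.range_eq_Ico, hA, Finset.mul_sum]
        exact Finset.sum_congr rfl fun m _ => by ring
      have hbase : A r' ≤ (1/2)^(K r') - 2*(1/2)^n := by
        rw [hA]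
        simp only [Nat.Ico_succ_singleton, Finset.sum_singleton]
        rw [hwr, hKr]
        have hkl : 2 ≤ k r' := by simpa using hklast
        have hks : K r' + k r' = n := by have := hKs r'; omega
        have hpK : ((1:ℚ)/2)^(K r') * (1/2)^(k r') = (1/2)^n := by
          rw [← pow_add, hks]
        have hpos : (0:ℚ) < (1/2)^(K r') := by positivity
        have h2 := mul_le_mul_of_nonneg_left (ineq2 (k r') hkl) hpos.le
        have e1 : (k r':ℚ) * ((1/2)^n * (1 - 0)) = (1/2)^(K r') * ((k r':ℚ)*(1/2)^(k r')) := by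
          rw [← hpK]; ring
        have e2 : (1/2:ℚ)^(K r') * (1 - 2*(1/2)^(k r')) = (1/2)^(K r') - 2*(1/2)^n := by
          rw [← hpK]; ring
        rw [e1]
        linarith [h2, e2.symm.le, e2.le]
      have hstep : ∀ l, l < r' →
          (k l:ℚ)*((1/2)^(K (l+1))*(1-w (l+1))) ≤ (1/2)^(K l) - (1/2)^(K (l+1)) := by
        intro l hl
        have h1 := ineq1 (k l) (hk1 l (by omega))
        have hw1 := wbound (l+1) (by omega)
        have hpK : ((1:ℚ)/2)^(K l) * (1/2)^(k l) = (1/2)^(K (l+1)) := by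
          rw [← pow_add, ← hKs l]
        have hpos : (0:ℚ) < (1/2)^(K l) := by positivity
        have hpos1 : (0:ℚ) < (1/2)^(K (l+1)) := by positivity
        have hknn : (0:ℚ) ≤ (k l : ℚ) := by positivity
        have h2 := mul_le_mul_of_nonneg_left h1 hpos.le
        have s1 : (k l:ℚ) * ((1/2)^(K (l+1))*(1-w (l+1))) ≤ (k l:ℚ) * (1/2)^(K (l+1)) := by
          have hnn : (0:ℚ) ≤ (k l:ℚ) * (1/2)^(K (l+1)) * w (l+1) :=
            mul_nonneg (mul_nonneg hknn hpos1.le) hw1.1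
          nlinarith [hnn]
        have e1 : (k l:ℚ) * (1/2)^(K (l+1)) = (1/2)^(K l) * ((k l:ℚ)*(1/2)^(k l)) := by
          rw [← hpK]; ring
        have e2 : (1/2:ℚ)^(K l) * (1 - (1/2)^(k l)) = (1/2)^(K l) - (1/2)^(K (l+1)) := by
          rw [← hpK]; ring
        rw [e1] at s1
        linarith [s1, h2, e2.le]
      have hsplitA : ∀ l, l < r' + 1 →
          A l = (k l:ℚ)*((1/2)^(K (l+1))*(1-w (l+1))) + A (l+1) := by
        intro l hl
        rw [hA]
        exact Finset.sum_eq_sum_Ico_succ_bot hl _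
      have hinvA : ∀ j, j ≤ r' - 1 → A (r' - j) ≤ (1/2)^(K (r' - j)) - 2*(1/2)^n := by
        intro j
        induction j with
        | zero => intro _; simpa using hbase
        | succ j ih =>
          intro hj
          have hl : r' - (j+1) < r' := by omega
          have hl1 : r' - (j+1) + 1 = r' - j := by omega
          have hterm := hstep (r' - (j+1)) hl
          have hih := ih (by omega)
          rw [hsplitA _ (by omega), hl1]
          rw [hl1] at hterm
          linarith [hterm, hih]
      have hA1 : A 1 ≤ (1/2)^(K 1) - 2*(1/2)^n := by
        have := hinvA (r'-1) (le_refl _)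
        rwa [show r' - (r'-1) = 1 by omega] at this
      have hw1pos : 0 < w 1 := by
        rw [hwrec 1 (by omega)]
        have h2 := wbound 2 (by omega)
        have hp : (0:ℚ) < (1/2)^(k 1) := by positivity
        nlinarith [h2.2]
      have hterm0 : (k 0:ℚ)*((1/2)^(K 1)*(1-w 1)) < (1/2)^(K 0) - (1/2)^(K 1) := by
        have h1 := ineq1 (k 0) (hk1 0 (by omega))
        have hpK : ((1:ℚ)/2)^(K 0) * (1/2)^(k 0) = (1/2)^(K 1) := by
          rw [← pow_add, ← hKs 0]
        have hpos : (0:ℚ) < (1/2)^(K 0) := by positivity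
        have hpos1 : (0:ℚ) < (1/2)^(K 1) := by positivity
        have hk0 : (1:ℚ) ≤ (k 0:ℚ) := by exact_mod_cast hk1 0 (by omega)
        have h2 := mul_le_mul_of_nonneg_left h1 hpos.le
        have s1 : (k 0:ℚ) * ((1/2)^(K 1)*(1-w 1)) < (k 0:ℚ) * (1/2)^(K 1) := by
          have hprod : (0:ℚ) < (k 0:ℚ) * (1/2)^(K 1) * w 1 :=
            mul_pos (mul_pos (by linarith) hpos1) hw1pos
          nlinarith [hprod]
        have e1 : (k 0:ℚ) * (1/2)^(K 1) = (1/2)^(K 0) * ((k 0:ℚ)*(1/2)^(k 0)) := by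
          rw [← hpK]; ring
        have e2 : (1/2:ℚ)^(K 0) * (1 - (1/2)^(k 0)) = (1/2)^(K 0) - (1/2)^(K 1) := by
          rw [← hpK]; ring
        rw [e1] at s1
        linarith [s1, h2, e2.le]
      have hA0 : A 0 < 1 - 2*(1/2)^n := by
        rw [hsplitA 0 (by omega)]
        have hK0' : ((1:ℚ)/2)^(K 0) = 1 := by rw [hK0, pow_zero]
        have := hterm0
        rw [hK0'] at this
        linarith [hA1]
      rw [hSA, h2eq]
      linarith [hA0]
  refine ⟨⟨hlow, hupper⟩, ?_⟩
  constructor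
  · intro hEq
    by_contra hne
    have h2 : 2 ≤ r := by omega
    have := hlow_strict h2
    linarith
  · intro h1
    rw [hr1S h1, hhalf]

lemma layerSum_r {n r : ℕ} (L : Fin n → Fin r) : layerSum L r = n := by
  rw [layerSum]
  have h := Finset.card_eq_sum_card_fiberwise
    (f := fun j : Fin n => (L j : ℕ)) (s := Finset.univ) (t := Finset.range r)
    (fun j _ => Finset.mem_range.mpr (L j).isLt)
  calc ∑ i ∈ Finset.range r, layerSize L i
      = (Finset.univ : Finset (Fin n)).card := h.symm
    _ = n := by simp

lemma avgSens_eq {n r : ℕ} (L : Fin n → Fin r) (a : Fin n → ZMod 2)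
    (f : (Fin n → ZMod 2) → ZMod 2) (b : ZMod 2)
    (hform : ∀ x, f x = nestVal (fun i => layerMon L a i x) r 0 + b) :
    avgSens f = ∑ m ∈ Finset.range r, (layerSize L m : ℚ)
      * (2 * (1/2)^(layerSum L (m+1)) * (1 - wq L a (m+1))) := by
  rw [avgSens]
  rw [Finset.sum_congr rfl (fun v _ => activity_eq L a f b hform v)]
  rw [← Finset.sum_fiberwise_of_maps_to (g := fun v : Fin n => (L v : ℕ))
    (t := Finset.range r) (fun v _ => Finset.mem_range.mpr (L v).isLt) _]
  refine Finset.sum_congr rfl fun m hm => ?_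
  rw [Finset.sum_congr rfl (fun v hv => by
    rw [(Finset.mem_filter.mp hv).2] :
      ∀ v ∈ Finset.univ.filter (fun v : Fin n => (L v : ℕ) = m),
        2 * (1/2)^(layerSum L ((L v : ℕ)+1)) * (1 - wq L a ((L v : ℕ)+1))
        = 2 * (1/2)^(layerSum L (m+1)) * (1 - wq L a (m+1)))]
  rw [Finset.sum_const, layerSize, nsmul_eq_mul]

end S16

/-- For `n ≥ 3` and `f` nested canalizing, the average sensitivity satisfies
`n/2^{n−1} ≤ sᶠ < 2 − 1/2^{n−2}`, and the lower bound is attained exactly by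
the nested canalizing functions with layer number 1. -/
theorem statement16 {n : ℕ} (hn : 3 ≤ n) (f : (Fin n → ZMod 2) → ZMod 2)
    (hf : ∃ (r : ℕ) (L : Fin n → Fin r) (a : Fin n → ZMod 2) (b : ZMod 2),
      IsLayeredForm f L a b) :
    ((n : ℚ) / 2 ^ (n - 1) ≤ avgSens f ∧ avgSens f < 2 - 1 / 2 ^ (n - 2)) ∧
    (avgSens f = (n : ℚ) / 2 ^ (n - 1) ↔
      ∃ (L : Fin n → Fin 1) (a : Fin n → ZMod 2) (b : ZMod 2),
        IsLayeredForm f L a b) := by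
  classical
  obtain ⟨r, L, a, b, hLF⟩ := hf
  obtain ⟨hr, hk, hkl, hform⟩ := hLF
  have havg := S16.avgSens_eq L a f b hform
  have main := S16.numeric_main (layerSize L) (layerSum L) (S16.wq L a) (avgSens f) hn hr
    (by simp [layerSum]) (fun m => Finset.sum_range_succ _ _) (S16.layerSum_r L)
    (fun m hm => hk ⟨m, hm⟩) hkl (S16.wq_r L a) (fun l hl => S16.wq_rec L a l hl) havg
  refine ⟨main.1, ?_⟩
  constructor
  · intro hEq
    have hr1 := main.2.mp hEq
    subst hr1
    exact ⟨L, a, b, hr, hk, hkl, hform⟩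
  · rintro ⟨L1, a1, b1, hr1, hk1, hkl1, hform1⟩
    have havg1 := S16.avgSens_eq L1 a1 f b1 hform1
    have main1 := S16.numeric_main (layerSize L1) (layerSum L1) (S16.wq L1 a1) (avgSens f)
      hn hr1 (by simp [layerSum]) (fun m => Finset.sum_range_succ _ _) (S16.layerSum_r L1)
      (fun m hm => hk1 ⟨m, hm⟩) hkl1 (S16.wq_r L1 a1) (fun l hl => S16.wq_rec L1 a1 l hl) havg1
    exact main1.2.mpr rfl
end

section
/- Let n ≥ 6 be even and let f : 𝔽₂ⁿ → 𝔽₂ be a nested canalizing function whose layered form has layer number r = n/2 with layer sizes k₁ = 1, k₂ = ⋯ = k_{n/2−1} = 2, and k_{n/2} = 3. Then the average sensitivity of f equals s^f = 4/3 − 4/(3 · 2ⁿ). -/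
lemma zval_mul (u v : ZMod 2) : ((u*v).val : ℚ) = (u.val : ℚ) * (v.val : ℚ) := by
  have : (u*v).val = u.val * v.val := by revert u v; decide
  exact_mod_cast congrArg (Nat.cast : ℕ → ℚ) this

lemma zval_le_one (u : ZMod 2) : u.val ≤ 1 := by revert u; decide

lemma zval_add_one (u : ZMod 2) : ((u+1).val : ℚ) = 1 - (u.val : ℚ) := by
  have h : ∀ w : ZMod 2, (w+1).val = 1 - w.val := by decide
  rw [h u, Nat.cast_sub (zval_le_one u)]
  norm_num

lemma sum_indep {n : ℕ} (S : Finset (Fin n)) (g h : (Fin n → ZMod 2) → ℚ)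
    (hg : ∀ x y, (∀ i ∈ S, x i = y i) → g x = g y)
    (hh : ∀ x y, (∀ i ∉ S, x i = y i) → h x = h y) :
    (2:ℚ)^n * ∑ x : Fin n → ZMod 2, g x * h x
      = (∑ x : Fin n → ZMod 2, g x) * (∑ x : Fin n → ZMod 2, h x) := by
  classical
  set p : Fin n → Prop := fun i => i ∈ S with hp
  let e := (Equiv.piEquivPiSubtypeProd p (fun _ => ZMod 2)).symm
  have key : ∀ (F : (Fin n → ZMod 2) → ℚ), ∑ x, F x = ∑ z, F (e z) :=
    fun F => (Equiv.sum_comp e F).symm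
  have hgu : ∀ u v v', g (e (u, v)) = g (e (u, v')) := by
    intro u v v'
    apply hg
    intro i hi
    simp only [e, Equiv.piEquivPiSubtypeProd_symm_apply]
    rw [dif_pos hi, dif_pos hi]
  have hhv : ∀ u u' v, h (e (u, v)) = h (e (u', v)) := by
    intro u u' v
    apply hh
    intro i hi
    simp only [e, Equiv.piEquivPiSubtypeProd_symm_apply]
    rw [dif_neg hi, dif_neg hi]
  set g' : (∀ _ : {x // p x}, ZMod 2) → ℚ := fun u => g (e (u, fun _ => 0)) with hg'
  set h' : (∀ _ : {x // ¬ p x}, ZMod 2) → ℚ := fun v => h (e (fun _ => 0, v)) with hh'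
  have e1 : ∑ x, g x * h x = (∑ u, g' u) * (∑ v, h' v) := by
    rw [key, Fintype.sum_prod_type, Finset.sum_mul_sum]
    refine Finset.sum_congr rfl fun u _ => Finset.sum_congr rfl fun v _ => ?_
    rw [hgu u v (fun _ => 0), hhv u (fun _ => 0) v]
  have e2 : ∑ x, g x = (Fintype.card (∀ _ : {x // ¬ p x}, ZMod 2) : ℚ) * ∑ u, g' u := by
    rw [key, Fintype.sum_prod_type]
    rw [Finset.sum_comm]
    have : ∀ v : (∀ _ : {x // ¬ p x}, ZMod 2), ∑ u, g (e (u, v)) = ∑ u, g' u :=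
      fun v => Finset.sum_congr rfl fun u _ => hgu u v (fun _ => 0)
    simp only [this]
    rw [Finset.sum_const, Finset.card_univ, nsmul_eq_mul]
  have e3 : ∑ x, h x = (Fintype.card (∀ _ : {x // p x}, ZMod 2) : ℚ) * ∑ v, h' v := by
    rw [key, Fintype.sum_prod_type]
    have : ∀ u : (∀ _ : {x // p x}, ZMod 2), ∑ v, h (e (u, v)) = ∑ v, h' v :=
      fun u => Finset.sum_congr rfl fun v _ => hhv u (fun _ => 0) v
    simp only [this]
    rw [Finset.sum_const, Finset.card_univ, nsmul_eq_mul]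
  have ecard : (2:ℚ)^n = (Fintype.card (∀ _ : {x // p x}, ZMod 2) : ℚ)
      * (Fintype.card (∀ _ : {x // ¬ p x}, ZMod 2) : ℚ) := by
    have := Fintype.card_congr e
    rw [Fintype.card_prod] at this
    rw [← Nat.cast_mul, this]
    simp [Fintype.card_fun, ZMod.card]
  rw [e1, e2, e3, ecard]
  ring

lemma sum_single {n : ℕ} (j : Fin n) (F : ZMod 2 → ℚ) :
    (∑ x : Fin n → ZMod 2, F (x j)) * 2 = (2:ℚ)^n * ∑ b : ZMod 2, F b := by
  classical
  let e := (Equiv.funSplitAt j (ZMod 2)).symm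
  have key : ∑ x : Fin n → ZMod 2, F (x j) = ∑ z, F ((e z) j) :=
    (Equiv.sum_comp e (fun x => F (x j))).symm
  have he : ∀ z, (e z) j = z.1 := by
    intro z
    simp [e, Equiv.funSplitAt, Equiv.piSplitAt]
  rw [key]
  simp only [he]
  rw [Fintype.sum_prod_type]
  simp only [Finset.sum_const, Finset.card_univ, nsmul_eq_mul]
  have hcard : (Fintype.card ({j' // j' ≠ j} → ZMod 2) : ℚ) * 2 = 2^n := by
    rw [Fintype.card_fun]
    have h1 : Fintype.card {j' // j' ≠ j} = n - 1 := by
      simp [Fintype.card_subtype_compl]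
    rw [h1, ZMod.card]
    have hn : n - 1 + 1 = n := Nat.succ_pred_eq_of_pos j.pos
    push_cast
    rw [← pow_succ, hn]
  rw [Finset.sum_mul, ← hcard, Finset.mul_sum]
  refine Finset.sum_congr rfl fun b _ => by ring

lemma sum_zmod (c : ZMod 2) : ∑ b : ZMod 2, ((b + c).val : ℚ) = 1 := by
  have h : ∑ b : ZMod 2, ((b + c).val : ℕ) = 1 := by revert c; decide
  exact_mod_cast congrArg (Nat.cast : ℕ → ℚ) h

lemma sum_coord {n : ℕ} (j : Fin n) (c : ZMod 2) :
    ∑ x : Fin n → ZMod 2, ((x j + c).val : ℚ) = 2^n / 2 := by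
  have h2 := sum_single j (fun b => ((b + c).val : ℚ))
  rw [sum_zmod] at h2
  rw [eq_div_iff (by norm_num : (2:ℚ) ≠ 0)]
  linarith [h2]

lemma sum_monomial {n : ℕ} (T : Finset (Fin n)) (a : Fin n → ZMod 2) :
    ∑ x : Fin n → ZMod 2, ((∏ j ∈ T, (x j + a j)).val : ℚ) = 2^n / 2^T.card := by
  classical
  induction T using Finset.induction_on with
  | empty =>
      simp [Finset.sum_const, Finset.card_univ, Fintype.card_fun, ZMod.card, ZMod.val_one]
  | insert j T hj ih =>
      have hsplit : ∀ x : Fin n → ZMod 2,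
          ((∏ i ∈ insert j T, (x i + a i)).val : ℚ)
            = ((x j + a j).val : ℚ) * ((∏ i ∈ T, (x i + a i)).val : ℚ) := by
        intro x
        rw [Finset.prod_insert hj, zval_mul]
      simp only [hsplit]
      have hind := sum_indep {j} (fun x => ((x j + a j).val : ℚ))
        (fun x => ((∏ i ∈ T, (x i + a i)).val : ℚ))
        (by
          intro x y hxy
          rw [hxy j (Finset.mem_singleton_self j)])
        (by
          intro x y hxy
          have : ∏ i ∈ T, (x i + a i) = ∏ i ∈ T, (y i + a i) := by
            refine Finset.prod_congr rfl fun i hi => ?_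
            rw [hxy i (by simp; rintro rfl; exact hj hi)]
          rw [this])
      rw [sum_coord, ih] at hind
      rw [Finset.card_insert_of_notMem hj]
      have h2n : (2:ℚ)^n ≠ 0 := by positivity
      apply mul_left_cancel₀ h2n
      rw [hind, pow_succ]
      have hT : (2:ℚ)^T.card ≠ 0 := by positivity
      field_simp
lemma nestVal_congr (M M' : ℕ → ZMod 2) (t : ℕ) : ∀ i, (∀ l, i ≤ l → l < i + t → M l = M' l) →
    nestVal M t i = nestVal M' t i := by
  induction t with
  | zero => intro i _; rfl
  | succ t ih =>
      intro i hM
      rw [nestVal_succ, nestVal_succ, hM i le_rfl (by omega),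
        ih (i+1) (fun l hl hl' => hM l (by omega) (by omega))]

lemma nestVal_diff (M M' : ℕ → ZMod 2) : ∀ (i t s : ℕ), i < t →
    (∀ l, l ≠ s + i → M' l = M l) →
    nestVal M' t s + nestVal M t s
      = (∏ l ∈ Finset.range i, M (s + l)) *
        ((M' (s+i) + M (s+i)) * (nestVal M (t - i - 1) (s + i + 1) + 1)) := by
  intro i
  induction i with
  | zero =>
      intro t s hit hM
      obtain ⟨t', rfl⟩ : ∃ t', t = t' + 1 := ⟨t - 1, by omega⟩
      rw [nestVal_succ, nestVal_succ]
      have hc : nestVal M' t' (s+1) = nestVal M t' (s+1) :=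
        nestVal_congr _ _ _ _ (fun l hl _ => hM l (by omega))
      rw [hc]
      simp only [Finset.range_zero, Finset.prod_empty, one_mul, Nat.add_zero,
        Nat.sub_zero, Nat.add_sub_cancel]
      ring
  | succ i ih =>
      intro t s hit hM
      obtain ⟨t', rfl⟩ : ∃ t', t = t' + 1 := ⟨t - 1, by omega⟩
      rw [nestVal_succ, nestVal_succ]
      have hMs : M' s = M s := hM s (by omega)
      have hIH := ih t' (s+1) (by omega) (fun l hl => hM l (by omega))
      have key : M' s * (nestVal M' t' (s+1) + 1) + M s * (nestVal M t' (s+1) + 1)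
          = M s * (nestVal M' t' (s+1) + nestVal M t' (s+1)) := by
        have h2 : ∀ u v w : ZMod 2, u*(v+1) + u*(w+1) = u*(v+w) := by decide
        rw [hMs, h2]
      rw [key, hIH, Finset.prod_range_succ']
      have h1 : ∀ l, s + 1 + l = s + (l + 1) := fun l => by omega
      have h2 : s + 1 + i = s + (i + 1) := by omega
      have h3 : t' - i - 1 = t' + 1 - (i + 1) - 1 := by omega
      have h4 : s + 1 + i + 1 = s + (i + 1) + 1 := by omega
      simp only [h1, h2, h3, h4, Nat.add_zero]
      ring

noncomputable def tailP {n r : ℕ} (L : Fin n → Fin r) (a : Fin n → ZMod 2) (t i : ℕ) : ℚ :=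
  (∑ x : Fin n → ZMod 2, ((nestVal (fun l => layerMon L a l x) t i).val : ℚ)) / 2^n

lemma layerMon_congr {n r : ℕ} (L : Fin n → Fin r) (a : Fin n → ZMod 2) (l : ℕ)
    (x y : Fin n → ZMod 2) (hxy : ∀ j, (L j : ℕ) = l → x j = y j) :
    layerMon L a l x = layerMon L a l y :=
  Finset.prod_congr rfl fun j hj => by
    rw [hxy j (by simpa using hj)]

lemma tailP_zero {n r : ℕ} (L : Fin n → Fin r) (a : Fin n → ZMod 2) (i : ℕ) :
    tailP L a 0 i = 0 := by
  simp [tailP, nestVal]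

lemma tailP_succ {n r : ℕ} (L : Fin n → Fin r) (a : Fin n → ZMod 2) (t i : ℕ) :
    tailP L a (t+1) i = (1 - tailP L a t (i+1)) / 2^(layerSize L i) := by
  classical
  have hsplit : ∀ x : Fin n → ZMod 2,
      ((nestVal (fun l => layerMon L a l x) (t+1) i).val : ℚ)
        = ((layerMon L a i x).val : ℚ)
          * (((nestVal (fun l => layerMon L a l x) t (i+1)) + 1).val : ℚ) := by
    intro x; rw [nestVal_succ, zval_mul]
  have hg : ∀ x y : Fin n → ZMod 2,
      (∀ j ∈ Finset.univ.filter (fun j : Fin n => (L j : ℕ) = i), x j = y j) →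
      ((layerMon L a i x).val : ℚ) = ((layerMon L a i y).val : ℚ) := by
    intro x y hxy
    rw [layerMon_congr L a i x y (fun j hj => hxy j (by simp [hj]))]
  have hh : ∀ x y : Fin n → ZMod 2,
      (∀ j ∉ Finset.univ.filter (fun j : Fin n => (L j : ℕ) = i), x j = y j) →
      (((nestVal (fun l => layerMon L a l x) t (i+1)) + 1).val : ℚ)
        = (((nestVal (fun l => layerMon L a l y) t (i+1)) + 1).val : ℚ) := by
    intro x y hxy
    have : nestVal (fun l => layerMon L a l x) t (i+1)
        = nestVal (fun l => layerMon L a l y) t (i+1) := by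
      refine nestVal_congr _ _ _ _ (fun l hl _ => ?_)
      refine layerMon_congr L a l x y (fun j hj => hxy j (by simp [hj]; omega))
    rw [this]
  have hind := sum_indep (Finset.univ.filter fun j : Fin n => (L j : ℕ) = i)
    (fun x => ((layerMon L a i x).val : ℚ))
    (fun x => (((nestVal (fun l => layerMon L a l x) t (i+1)) + 1).val : ℚ))
    hg hh
  simp only [← hsplit] at hind
  have hmon : ∑ x : Fin n → ZMod 2, ((layerMon L a i x).val : ℚ)
      = 2^n / 2^(layerSize L i) := by
    have := sum_monomial (Finset.univ.filter fun j : Fin n => (L j : ℕ) = i) a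
    simpa [layerMon, layerSize] using this
  set A := ∑ x : Fin n → ZMod 2,
      ((nestVal (fun l => layerMon L a l x) (t+1) i).val : ℚ) with hA
  set B := ∑ x : Fin n → ZMod 2,
      ((nestVal (fun l => layerMon L a l x) t (i+1)).val : ℚ) with hB
  have hsum1 : ∑ x : Fin n → ZMod 2,
      (((nestVal (fun l => layerMon L a l x) t (i+1)) + 1).val : ℚ) = 2^n - B := by
    have : ∀ x : Fin n → ZMod 2,
        (((nestVal (fun l => layerMon L a l x) t (i+1)) + 1).val : ℚ)
          = 1 - ((nestVal (fun l => layerMon L a l x) t (i+1)).val : ℚ) :=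
      fun x => zval_add_one _
    simp only [this]
    rw [Finset.sum_sub_distrib, Finset.sum_const, Finset.card_univ, nsmul_eq_mul,
      Fintype.card_fun, ZMod.card, Fintype.card_fin]
    push_cast
    ring
  rw [hmon, hsum1] at hind
  show A / 2^n = (1 - B / 2^n) / 2^(layerSize L i)
  have h2n : (2:ℚ)^n ≠ 0 := by positivity
  have hk : (2:ℚ)^(layerSize L i) ≠ 0 := by positivity
  field_simp
  field_simp at hind
  nlinarith [hind]

lemma activity_layered {n r : ℕ} (L : Fin n → Fin r) (a : Fin n → ZMod 2)
    (f : (Fin n → ZMod 2) → ZMod 2) (b : ZMod 2)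
    (hf : ∀ x, f x = nestVal (fun l => layerMon L a l x) r 0 + b)
    (j : Fin n) :
    activity f j = (1 - tailP L a (r - (L j : ℕ) - 1) ((L j : ℕ) + 1))
      / (2^((Finset.univ.filter (fun j' : Fin n => (L j' : ℕ) < (L j : ℕ))).card)
         * 2^(layerSize L (L j : ℕ) - 1)) := by
  classical
  set i := (L j : ℕ) with hidef
  have hi : i < r := (L j).isLt
  set S1 := Finset.univ.filter (fun j' : Fin n => (L j' : ℕ) < i) with hS1
  set S2 := Finset.univ.filter (fun j' : Fin n => (L j' : ℕ) = i) with hS2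
  have hjmem : j ∈ S2 := by simp [hS2, hidef]
  -- the three factor functions
  set P : (Fin n → ZMod 2) → ZMod 2 :=
    fun x => ∏ l ∈ Finset.range i, layerMon L a l x with hP
  set Q : (Fin n → ZMod 2) → ZMod 2 :=
    fun x => ∏ j' ∈ S2.erase j, (x j' + a j') with hQ
  set R : (Fin n → ZMod 2) → ZMod 2 :=
    fun x => nestVal (fun l => layerMon L a l x) (r - i - 1) (i + 1) + 1 with hR
  -- pointwise difference formula
  have hpoint : ∀ x : Fin n → ZMod 2,
      f (Function.update x j (x j + 1)) + f x = P x * (Q x * R x) := by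
    intro x
    set x' := Function.update x j (x j + 1) with hx'
    have hcancel : ∀ u v w : ZMod 2, (u + w) + (v + w) = u + v := by decide
    rw [hf x', hf x, hcancel]
    have hM : ∀ l, l ≠ 0 + i →
        layerMon L a l x' = layerMon L a l x := by
      intro l hl
      refine layerMon_congr L a l x' x (fun j' hj' => ?_)
      have : j' ≠ j := by rintro rfl; omega
      simp [hx', Function.update_of_ne this]
    have hdiff := nestVal_diff (fun l => layerMon L a l x)
      (fun l => layerMon L a l x') i r 0 hi hM
    simp only [Nat.zero_add] at hdiff
    have hQQ : layerMon L a i x' + layerMon L a i x = Q x := by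
      have hx : layerMon L a i x = (x j + a j) * Q x := by
        rw [hQ]
        simp only [layerMon, ← hS2]
        exact (Finset.mul_prod_erase _ _ hjmem).symm
      have hx'2 : layerMon L a i x' = (x j + 1 + a j) * Q x := by
        have : layerMon L a i x' = (x' j + a j) * ∏ j' ∈ S2.erase j, (x' j' + a j') := by
          simp only [layerMon, ← hS2]
          exact (Finset.mul_prod_erase _ _ hjmem).symm
        rw [this]
        have h1 : x' j = x j + 1 := Function.update_self _ _ _
        have h2 : ∀ j' ∈ S2.erase j, (x' j' + a j') = (x j' + a j') := by
          intro j' hj'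
          exact congrArg (fun t => t + a j')
            (Function.update_of_ne (Finset.ne_of_mem_erase hj') _ _)
        rw [h1, Finset.prod_congr rfl h2]
      rw [hx, hx'2]
      have : ∀ u c q : ZMod 2, (u + 1 + c) * q + (u + c) * q = q := by decide
      exact this _ _ _
    rw [hdiff, hQQ]
  -- cast to ℚ
  have hval : ∀ x : Fin n → ZMod 2,
      ((f (Function.update x j (x j + 1)) + f x).val : ℚ)
        = ((P x).val : ℚ) * (((Q x).val : ℚ) * ((R x).val : ℚ)) := by
    intro x
    rw [hpoint x, zval_mul, zval_mul]
  -- dependence facts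
  have hgP : ∀ x y : Fin n → ZMod 2, (∀ i' ∈ S1, x i' = y i') →
      ((P x).val : ℚ) = ((P y).val : ℚ) := by
    intro x y hxy
    have : P x = P y := by
      refine Finset.prod_congr rfl fun l hl => ?_
      refine layerMon_congr L a l x y fun j' hj' => hxy j' ?_
      simp only [hS1, Finset.mem_filter, Finset.mem_univ, true_and]
      rw [hj']
      exact Finset.mem_range.mp hl
    rw [this]
  have hQdep : ∀ x y : Fin n → ZMod 2, (∀ j' ∈ S2, x j' = y j') → Q x = Q y := by
    intro x y hxy
    refine Finset.prod_congr rfl fun j' hj' => ?_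
    rw [hxy j' (Finset.mem_of_mem_erase hj')]
  have hRdep : ∀ x y : Fin n → ZMod 2, (∀ j', i < (L j' : ℕ) → x j' = y j') → R x = R y := by
    intro x y hxy
    have : nestVal (fun l => layerMon L a l x) (r - i - 1) (i+1)
        = nestVal (fun l => layerMon L a l y) (r - i - 1) (i+1) := by
      refine nestVal_congr _ _ _ _ (fun l hl _ => ?_)
      refine layerMon_congr L a l x y fun j' hj' => hxy j' (by omega)
    simp only [hR, this]
  have houter : ∀ x y : Fin n → ZMod 2, (∀ i' ∉ S1, x i' = y i') →
      ((Q x).val : ℚ) * ((R x).val : ℚ) = ((Q y).val : ℚ) * ((R y).val : ℚ) := by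
    intro x y hxy
    have hQ' : Q x = Q y := by
      refine hQdep x y fun j' hj' => hxy j' ?_
      simp only [hS2, Finset.mem_filter, Finset.mem_univ, true_and] at hj'
      simp only [hS1, Finset.mem_filter, Finset.mem_univ, true_and]
      omega
    have hR' : R x = R y := by
      refine hRdep x y fun j' hj' => hxy j' ?_
      simp only [hS1, Finset.mem_filter, Finset.mem_univ, true_and]
      omega
    rw [hQ', hR']
  -- the two independence identities
  have hindO := sum_indep S1 (fun x => ((P x).val : ℚ))
    (fun x => ((Q x).val : ℚ) * ((R x).val : ℚ)) hgP houter
  have hindI := sum_indep S2 (fun x => ((Q x).val : ℚ)) (fun x => ((R x).val : ℚ))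
    (fun x y hxy =>
      congrArg (fun z : ZMod 2 => ((z.val : ℕ) : ℚ)) (hQdep x y hxy))
    (fun x y hxy =>
      congrArg (fun z : ZMod 2 => ((z.val : ℕ) : ℚ)) (hRdep x y fun j' hj' => hxy j' (by
        simp only [hS2, Finset.mem_filter, Finset.mem_univ, true_and]
        omega)))
  -- values of the three sums
  have hSP : ∑ x : Fin n → ZMod 2, ((P x).val : ℚ) = 2^n / 2^(S1.card) := by
    have hprod : ∀ x : Fin n → ZMod 2, P x = ∏ j' ∈ S1, (x j' + a j') := by
      intro x
      have hmap : ∀ j' ∈ S1, (L j' : ℕ) ∈ Finset.range i := by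
        intro j' hj'
        simp only [hS1, Finset.mem_filter, Finset.mem_univ, true_and] at hj'
        exact Finset.mem_range.mpr hj'
      rw [← Finset.prod_fiberwise_of_maps_to hmap (fun j' => x j' + a j')]
      refine Finset.prod_congr rfl fun l hl => ?_
      have hli : l < i := Finset.mem_range.mp hl
      simp only [layerMon]
      congr 1
      ext j'
      simp only [hS1, Finset.mem_filter, Finset.mem_univ, true_and]
      omega
    simp only [hprod]
    exact sum_monomial S1 a
  have hSQ : ∑ x : Fin n → ZMod 2, ((Q x).val : ℚ)
      = 2^n / 2^(layerSize L i - 1) := by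
    have := sum_monomial (S2.erase j) a
    rw [Finset.card_erase_of_mem hjmem] at this
    have hcard : S2.card = layerSize L i := rfl
    rw [hcard] at this
    exact this
  set TP := tailP L a (r - i - 1) (i + 1) with hTP
  have hSR : ∑ x : Fin n → ZMod 2, ((R x).val : ℚ) = 2^n - TP * 2^n := by
    have hsum : ∀ x : Fin n → ZMod 2, ((R x).val : ℚ)
        = 1 - ((nestVal (fun l => layerMon L a l x) (r - i - 1) (i+1)).val : ℚ) :=
      fun x => zval_add_one _
    simp only [hsum]
    rw [Finset.sum_sub_distrib, Finset.sum_const, Finset.card_univ, nsmul_eq_mul,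
      Fintype.card_fun, ZMod.card, Fintype.card_fin]
    have h2n : (2:ℚ)^n ≠ 0 := by positivity
    have ht : TP * 2^n
        = ∑ x : Fin n → ZMod 2,
            ((nestVal (fun l => layerMon L a l x) (r - i - 1) (i+1)).val : ℚ) := by
      rw [hTP, tailP]
      field_simp
    rw [← ht]
    push_cast
    ring
  -- finish
  set SD := ∑ x : Fin n → ZMod 2, ((P x).val : ℚ) * (((Q x).val : ℚ) * ((R x).val : ℚ))
    with hSD
  set SQR := ∑ x : Fin n → ZMod 2, ((Q x).val : ℚ) * ((R x).val : ℚ) with hSQR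
  have hact : activity f j = (1 / 2^n) * SD := by
    rw [activity, hSD]
    congr 1
    exact Finset.sum_congr rfl fun x _ => hval x
  rw [hact]
  rw [hSP] at hindO
  rw [hSQ, hSR] at hindI
  have h2n : (2:ℚ)^n ≠ 0 := by positivity
  have hc1 : (2:ℚ)^(S1.card) ≠ 0 := by positivity
  have hc2 : (2:ℚ)^(layerSize L i - 1) ≠ 0 := by positivity
  have eSQR : SQR * 2 ^ (layerSize L i - 1) = 2^n - TP * 2^n := by
    apply mul_left_cancel₀ h2n
    have hh := congrArg (fun z => z * (2:ℚ) ^ (layerSize L i - 1)) hindI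
    calc 2^n * (SQR * 2^(layerSize L i - 1)) = 2^n * SQR * 2^(layerSize L i - 1) := by ring
      _ = 2^n / 2^(layerSize L i - 1) * (2^n - TP*2^n) * 2^(layerSize L i - 1) := hh
      _ = 2^n * (2^n - TP*2^n) := by field_simp
  have key : SD * (2^S1.card * 2^(layerSize L i - 1)) = (1 - TP) * 2^n := by
    apply mul_left_cancel₀ h2n
    calc 2^n * (SD * (2^S1.card * 2^(layerSize L i - 1)))
        = (2^n * SD) * 2^S1.card * 2^(layerSize L i - 1) := by ring
      _ = (2^n / 2^S1.card * SQR) * 2^S1.card * 2^(layerSize L i - 1) := by rw [hindO]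
      _ = 2^n * (SQR * 2^(layerSize L i - 1)) := by field_simp
      _ = 2^n * (2^n - TP * 2^n) := by rw [eSQR]
      _ = 2^n * ((1 - TP) * 2^n) := by ring
  rw [eq_div_iff (mul_ne_zero hc1 hc2)]
  calc (1/2^n * SD) * (2^S1.card * 2^(layerSize L i - 1))
      = 1/2^n * (SD * (2^S1.card * 2^(layerSize L i - 1))) := by ring
    _ = 1/2^n * ((1 - TP) * 2^n) := by rw [key]
    _ = 1 - TP := by field_simp

noncomputable def uuAux (t : ℕ) : ℚ :=
  if t = 0 then 0 else 1/5 - (3/40) * (-1/4:ℚ)^(t-1)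

lemma final_sum (r : ℕ) (hr : 3 ≤ r) :
    ∑ i ∈ Finset.range r, (if i = 0 then (1:ℚ) - uuAux (r-1)
      else if i = r-1 then 3 / 2^(2*r-1)
      else 2 * (1 - uuAux (r-1-i)) / (2^(2*i-1) * 2))
    = 4/3 - 4/(3 * 2^(2*r)) := by
  obtain ⟨m, rfl⟩ : ∃ m, r = m + 2 := ⟨r - 2, by omega⟩
  have hm : 1 ≤ m := by omega
  rw [Finset.sum_range_succ, Finset.sum_range_succ']
  have hlast : (if m + 1 = 0 then (1:ℚ) - uuAux (m+2-1)
      else if m + 1 = m+2-1 then 3 / 2^(2*(m+2)-1)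
      else 2 * (1 - uuAux (m+2-1-(m+1))) / (2^(2*(m+1)-1) * 2)) = 3 / 2^(2*m+3) := by
    rw [if_neg (by omega), if_pos (by omega), show 2*(m+2)-1 = 2*m+3 from by omega]
  have hfirst : (if 0 = 0 then (1:ℚ) - uuAux (m+2-1)
      else if 0 = m+2-1 then 3 / 2^(2*(m+2)-1)
      else 2 * (1 - uuAux (m+2-1-0)) / (2^(2*0-1) * 2)) = 1 - uuAux (m+1) := by
    rw [if_pos rfl, show m+2-1 = m+1 from by omega]
  have hmid : ∀ i ∈ Finset.range m,
      (if i + 1 = 0 then (1:ℚ) - uuAux (m+2-1)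
      else if i + 1 = m+2-1 then 3 / 2^(2*(m+2)-1)
      else 2 * (1 - uuAux (m+2-1-(i+1))) / (2^(2*(i+1)-1) * 2))
      = 2 * (1 - uuAux (m-i)) / (2^(2*i+1) * 2) := by
    intro i hi
    have him : i < m := Finset.mem_range.mp hi
    rw [if_neg (by omega), if_neg (by omega)]
    have h1 : m+2-1-(i+1) = m - i := by omega
    have h2 : 2*(i+1)-1 = 2*i+1 := by omega
    rw [h1, h2]
  rw [Finset.sum_congr rfl hmid, hfirst, hlast]
  -- reflect the middle sum
  have h4m : (4:ℚ)^m ≠ 0 := by positivity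
  have hpt : ∀ j ∈ Finset.range m,
      2 * (1 - uuAux (m-(m-1-j))) / (2^(2*(m-1-j)+1) * 2)
        = 2/4^m * ((4/5) * 4^j + (3/40) * (-1:ℚ)^j) := by
    intro j hj
    have hjm : j < m := Finset.mem_range.mp hj
    rw [show m-(m-1-j) = j+1 from by omega, show 2*(m-1-j)+1 = 2*m-2*j-1 from by omega]
    have huu : uuAux (j+1) = 1/5 - (3/40) * (-1/4:ℚ)^j := by
      simp [uuAux]
    rw [huu]
    have hps : (2:ℚ)^(2*m-2*j-1) * 2 = 2^(2*m-2*j) := by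
      rw [← pow_succ, show 2*m-2*j-1+1 = 2*m-2*j from by omega]
    rw [hps]
    have h4 : (4:ℚ)^m = 2^(2*m-2*j) * 4^j := by
      have : (4:ℚ)^j = 2^(2*j) := by rw [pow_mul]; norm_num
      rw [this, ← pow_add, show 2*m-2*j+2*j = 2*m from by omega, pow_mul]
      norm_num
    have hneg : (-1/4:ℚ)^j = (-1:ℚ)^j / 4^j := by
      rw [div_pow]
    rw [h4, hneg]
    have hA : (2:ℚ)^(2*m-2*j) ≠ 0 := by positivity
    have hB : (4:ℚ)^j ≠ 0 := by positivity
    field_simp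
    ring
  have hrefl := Finset.sum_range_reflect
    (fun j => 2 * (1 - uuAux (m-j)) / (2^(2*j+1) * 2)) m
  have hmid2 : ∑ i ∈ Finset.range m, 2 * (1 - uuAux (m-i)) / (2^(2*i+1) * 2)
      = 2/4^m * ((4/5) * ((4^m - 1)/3) + (3/40) * (if Even m then (0:ℚ) else 1)) := by
    rw [← hrefl, Finset.sum_congr rfl hpt]
    rw [← Finset.mul_sum]
    congr 1
    rw [Finset.sum_add_distrib, ← Finset.mul_sum, ← Finset.mul_sum]
    rw [geom_sum_eq (by norm_num : (4:ℚ) ≠ 1) m, neg_one_geom_sum]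
    norm_num
  rw [hmid2]
  have huu1 : uuAux (m+1) = 1/5 - (3/40) * (-1/4:ℚ)^m := by simp [uuAux]
  rw [huu1]
  have hneg : (-1/4:ℚ)^m = (-1:ℚ)^m / 4^m := by rw [div_pow]
  rw [hneg]
  have hp1 : (2:ℚ)^(2*m+3) = 8 * 4^m := by
    rw [pow_add, pow_mul]; norm_num; ring
  have hp2 : (2:ℚ)^(2*(m+2)) = 16 * 4^m := by
    rw [show 2*(m+2) = 2*m+4 from by omega, pow_add, pow_mul]; norm_num; ring
  rw [hp1, hp2]
  rcases Nat.even_or_odd m with he | ho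
  · rw [if_pos he, he.neg_one_pow]
    field_simp
    ring
  · rw [if_neg (Nat.not_even_iff_odd.mpr ho), ho.neg_one_pow]
    field_simp
    ring

/-- For even `n ≥ 6`, a nested canalizing function whose layered form has
layer number `r = n/2` with layer sizes `k₁ = 1`, `k₂ = ⋯ = k_{n/2−1} = 2`,
`k_{n/2} = 3` has average sensitivity `sᶠ = 4/3 − 4/(3·2ⁿ)`. -/
theorem statement19 {n : ℕ} (hn : 6 ≤ n) (hev : Even n)
    (f : (Fin n → ZMod 2) → ZMod 2)
    (L : Fin n → Fin (n / 2)) (a : Fin n → ZMod 2) (b : ZMod 2)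
    (h : IsLayeredForm f L a b)
    (hsize : ∀ l : Fin (n / 2),
      layerSize L (l : ℕ) =
        if (l : ℕ) = 0 then 1 else if (l : ℕ) = n / 2 - 1 then 3 else 2) :
    avgSens f = 4 / 3 - 4 / (3 * 2 ^ n) := by
  classical
  obtain ⟨k, hk⟩ := hev
  have hn2 : n = 2 * (n / 2) := by omega
  have hr3 : 3 ≤ n / 2 := by omega
  have hform : ∀ x, f x = nestVal (fun i => layerMon L a i x) (n / 2) 0 + b := h.2.2.2
  have hsz : ∀ i : ℕ, i < (n / 2) →
      layerSize L i = if i = 0 then 1 else if i = (n / 2) - 1 then 3 else 2 := by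
    intro i hi
    simpa using hsize ⟨i, hi⟩
  -- tail probabilities
  have hA : ∀ t, t ≤ (n / 2) - 1 → tailP L a t ((n / 2) - t) = uuAux t := by
    intro t
    induction t with
    | zero =>
        intro _
        rw [Nat.sub_zero, tailP_zero]
        simp [uuAux]
    | succ t ih =>
        intro ht
        have hstep := tailP_succ L a t ((n / 2) - (t+1))
        rw [show (n / 2) - (t+1) + 1 = (n / 2) - t from by omega] at hstep
        rw [hstep, ih (by omega), hsz ((n / 2)-(t+1)) (by omega)]
        by_cases h0 : t = 0
        · subst h0
          rw [if_neg (by omega), if_pos (by omega)]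
          simp [uuAux]
          norm_num
        · rw [if_neg (by omega), if_neg (by omega)]
          obtain ⟨t', rfl⟩ : ∃ t', t = t'+1 := ⟨t-1, by omega⟩
          simp only [uuAux, if_neg (Nat.succ_ne_zero _), Nat.add_sub_cancel]
          rw [pow_succ]
          norm_num
          ring
  -- cardinality of the union of the first i layers
  have hfib : ∀ i : ℕ,
      (Finset.univ.filter (fun j' : Fin n => (L j' : ℕ) < i)).card
        = ∑ l ∈ Finset.range i, layerSize L l := by
    intro i
    rw [Finset.card_eq_sum_ones]
    have hmap : ∀ j' ∈ Finset.univ.filter (fun j' : Fin n => (L j' : ℕ) < i),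
        (L j' : ℕ) ∈ Finset.range i := by
      intro j' hj'
      simp only [Finset.mem_filter, Finset.mem_univ, true_and] at hj'
      exact Finset.mem_range.mpr hj'
    rw [← Finset.sum_fiberwise_of_maps_to hmap (fun _ => (1:ℕ))]
    refine Finset.sum_congr rfl fun l hl => ?_
    rw [← Finset.card_eq_sum_ones]
    have hli : l < i := Finset.mem_range.mp hl
    unfold layerSize
    congr 1
    ext j'
    simp only [Finset.mem_filter, Finset.mem_univ, true_and]
    omega
  have hsum2 : ∀ i : ℕ, i ≤ (n / 2) - 1 → ∑ l ∈ Finset.range i, layerSize L l = 2*i - 1 := by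
    intro i
    induction i with
    | zero => intro _; simp
    | succ i ih =>
        intro hi
        rw [Finset.sum_range_succ, ih (by omega), hsz i (by omega)]
        by_cases h0 : i = 0
        · subst h0
          rw [if_pos rfl]
        · rw [if_neg h0, if_neg (show i ≠ n / 2 - 1 by omega)]
          omega
  -- activity of each variable
  have hactj : ∀ j : Fin n, activity f j
      = (1 - uuAux ((n / 2) - 1 - (L j : ℕ)))
        / (2^(2*(L j : ℕ) - 1) * 2^(layerSize L (L j : ℕ) - 1)) := by
    intro j
    rw [activity_layered L a f b hform j]
    have hi : (L j : ℕ) < (n / 2) := (L j).isLt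
    rw [hfib (L j : ℕ), hsum2 (L j : ℕ) (by omega)]
    have htail : tailP L a ((n / 2) - (L j : ℕ) - 1) ((L j : ℕ) + 1)
        = uuAux ((n / 2) - 1 - (L j : ℕ)) := by
      have := hA ((n / 2) - (L j : ℕ) - 1) (by omega)
      rw [show (n / 2) - ((n / 2) - (L j : ℕ) - 1) = (L j : ℕ) + 1 from by omega] at this
      rw [this, show (n / 2) - (L j : ℕ) - 1 = (n / 2) - 1 - (L j : ℕ) from by omega]
    rw [htail]
  -- group by layers
  have hgroup : avgSens f = ∑ l ∈ Finset.range (n / 2),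
      (layerSize L l : ℚ) * ((1 - uuAux ((n / 2) - 1 - l)) / (2^(2*l - 1) * 2^(layerSize L l - 1))) := by
    rw [avgSens]
    have hmap : ∀ j ∈ Finset.univ, (L j : ℕ) ∈ Finset.range (n / 2) :=
      fun j _ => Finset.mem_range.mpr (L j).isLt
    rw [← Finset.sum_fiberwise_of_maps_to hmap (fun j => activity f j)]
    refine Finset.sum_congr rfl fun l hl => ?_
    have hconst : ∀ j ∈ Finset.univ.filter (fun j : Fin n => (L j : ℕ) = l),
        activity f j = (1 - uuAux ((n / 2) - 1 - l)) / (2^(2*l - 1) * 2^(layerSize L l - 1)) := by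
      intro j hj
      simp only [Finset.mem_filter, Finset.mem_univ, true_and] at hj
      rw [hactj j, hj]
    rw [Finset.sum_congr rfl hconst, Finset.sum_const, nsmul_eq_mul]
    rfl
  rw [hgroup]
  have hterm : ∀ l ∈ Finset.range (n / 2),
      (layerSize L l : ℚ) * ((1 - uuAux ((n / 2) - 1 - l)) / (2^(2*l - 1) * 2^(layerSize L l - 1)))
      = (if l = 0 then (1:ℚ) - uuAux ((n / 2)-1)
          else if l = (n / 2)-1 then 3 / 2^(2*(n / 2)-1)
          else 2 * (1 - uuAux ((n / 2)-1-l)) / (2^(2*l-1) * 2)) := by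
    intro l hl
    have hlr : l < (n / 2) := Finset.mem_range.mp hl
    rw [hsz l hlr]
    by_cases h0 : l = 0
    · subst h0
      rw [if_pos rfl, if_pos rfl]
      norm_num
    · rw [if_neg h0, if_neg h0]
      by_cases hr1 : l = (n / 2) - 1
      · subst hr1
        rw [if_pos rfl, if_pos rfl]
        have huu0 : uuAux ((n / 2) - 1 - ((n / 2)-1)) = 0 := by
          rw [Nat.sub_self]; simp [uuAux]
        rw [huu0]
        have hpw : (2:ℚ)^(2*((n / 2)-1)-1) * 2^(3-1) = 2^(2*(n / 2)-1) := by
          rw [← pow_add, show 2*((n / 2)-1)-1 + (3-1) = 2*(n / 2)-1 from by omega]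
        rw [hpw]
        norm_num
        rw [div_eq_mul_inv]
      · rw [if_neg hr1, if_neg hr1]
        norm_num
        ring
  rw [Finset.sum_congr rfl hterm, final_sum (n / 2) hr3,
    show 2 * (n / 2) = n from by omega]
end
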